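/- arXiv:1004.5236 — 6 statements merged into one kernel-verified Lean document; each statement's English description precedes it below -/
import Mathlib

section
/- There is a constant c > 0 and N : ℕ such that for every n ≥ N there exists an n-operator f : (Fin n → Bool) → (Fin n → Bool) such that every general boolean circuit on n inputs computing f has size (number of wires) at least c * n^2. -/
/-- A general boolean circuit on `n` inputs with `m` nodes: each gate computes an
arbitrary boolean function of its predecessors; there is no fanin/fanout restriction. -/
structure GenCircuit (n m : ℕ) where
  hnm : n ≤ m
  pred : Fin m → Finset (Fin m)
  out : Fin n → Fin m
  val : (Fin n → Bool) → (Fin m → Bool)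
  pred_lt : ∀ i : Fin m, ∀ j ∈ pred i, j < i
  pred_input : ∀ i : Fin m, (i : ℕ) < n → pred i = ∅
  val_input : ∀ (x : Fin n → Bool) (i : Fin m) (h : (i : ℕ) < n), val x i = x ⟨i, h⟩
  val_gate : ∀ i : Fin m, n ≤ (i : ℕ) → ∀ x y : Fin n → Bool,
    (∀ j ∈ pred i, val x j = val y j) → val x i = val y i

/-- The circuit computes the operator `f` if the value at the `i`-th output node is `f x i`. -/
def GenCircuit.Computes {n m : ℕ} (Φ : GenCircuit n m)
    (f : (Fin n → Bool) → (Fin n → Bool)) : Prop :=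
  ∀ (x : Fin n → Bool) (i : Fin n), Φ.val x (Φ.out i) = f x i

/-- The size of a circuit is its total number of wires. -/
def GenCircuit.size {n m : ℕ} (Φ : GenCircuit n m) : ℕ :=
  ∑ i : Fin m, (Φ.pred i).card

namespace QuadLB
open Finset

section Rank
variable {α β : Type*} [Fintype α] [DecidableEq β]
variable (ordf : α → ℕ) (φ : α → β)

/-- the minimal `ordf`-position at which the value `φ x` occurs -/
noncomputable def fo (x : α) : ℕ :=
  ((univ.filter fun y => φ y = φ x).image ordf).min'
    (Finset.Nonempty.image ⟨x, by simp⟩ _)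

lemma fo_spec (x : α) : ∃ y, φ y = φ x ∧ ordf y = fo ordf φ x := by
  have h := Finset.min'_mem ((univ.filter fun y => φ y = φ x).image ordf)
    (Finset.Nonempty.image ⟨x, by simp⟩ _)
  rw [Finset.mem_image] at h
  obtain ⟨y, hy, hy2⟩ := h
  exact ⟨y, (Finset.mem_filter.mp hy).2, hy2⟩

lemma fo_le (x y : α) (h : φ y = φ x) : fo ordf φ x ≤ ordf y :=
  Finset.min'_le _ _ (Finset.mem_image_of_mem _ (by simp [h]))

lemma fo_congr {x y : α} (h : φ x = φ y) : fo ordf φ x = fo ordf φ y := by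
  have hpred : (univ.filter fun y' => φ y' = φ x) = univ.filter fun y' => φ y' = φ y :=
    Finset.filter_congr (fun z _ => by rw [h])
  unfold fo
  congr 1
  rw [hpred]

variable (hord : Function.Injective ordf)

include hord in
lemma fo_inj {x y : α} (h : fo ordf φ x = fo ordf φ y) : φ x = φ y := by
  obtain ⟨a, ha1, ha2⟩ := fo_spec ordf φ x
  obtain ⟨b, hb1, hb2⟩ := fo_spec ordf φ y
  have : a = b := hord (by rw [ha2, hb2, h])
  rw [← ha1, ← hb1, this]

/-- number of distinct `φ`-values whose first occurrence is earlier than that of `φ x` -/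
noncomputable def rank (x : α) : ℕ :=
  ((univ.filter fun y => fo ordf φ y < fo ordf φ x).image φ).card

lemma rank_congr {x y : α} (h : φ x = φ y) : rank ordf φ x = rank ordf φ y := by
  unfold rank
  rw [fo_congr ordf φ h]

lemma not_mem_rank_set (x : α) :
    φ x ∉ (univ.filter fun y => fo ordf φ y < fo ordf φ x).image φ := by
  intro hmem
  rw [Finset.mem_image] at hmem
  obtain ⟨y, hy, hy2⟩ := hmem
  rw [Finset.mem_filter] at hy
  have := fo_congr ordf φ hy2.symm
  omega

lemma rank_lt_card_image (x : α) : rank ordf φ x < (univ.image φ).card := by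
  have hsub : (univ.filter fun y => fo ordf φ y < fo ordf φ x).image φ
      ⊆ (univ.image φ).erase (φ x) := by
    intro c hc
    rw [Finset.mem_image] at hc
    obtain ⟨y, hy, rfl⟩ := hc
    rw [Finset.mem_filter] at hy
    refine Finset.mem_erase.mpr ⟨?_, Finset.mem_image_of_mem _ (Finset.mem_univ _)⟩
    intro hEq
    have := fo_congr ordf φ hEq
    omega
  have h1 := Finset.card_le_card hsub
  have h2 : ((univ.image φ).erase (φ x)).card = (univ.image φ).card - 1 :=
    Finset.card_erase_of_mem (Finset.mem_image_of_mem _ (Finset.mem_univ _))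
  have h3 : 0 < (univ.image φ).card :=
    Finset.card_pos.mpr ⟨φ x, Finset.mem_image_of_mem _ (Finset.mem_univ _)⟩
  unfold rank
  omega

include hord in
lemma rank_inj {x y : α} (h : rank ordf φ x = rank ordf φ y) : φ x = φ y := by
  rcases lt_trichotomy (fo ordf φ x) (fo ordf φ y) with hlt | heq | hgt
  · exfalso
    -- rank x < rank y
    obtain ⟨a, ha1, ha2⟩ := fo_spec ordf φ x
    have hfa : fo ordf φ a = fo ordf φ x := fo_congr ordf φ ha1
    have hsub : insert (φ x) ((univ.filter fun z => fo ordf φ z < fo ordf φ x).image φ)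
        ⊆ (univ.filter fun z => fo ordf φ z < fo ordf φ y).image φ := by
      intro c hc
      rw [Finset.mem_insert] at hc
      rcases hc with rfl | hc
      · exact Finset.mem_image.mpr ⟨a, Finset.mem_filter.mpr ⟨Finset.mem_univ _, by omega⟩, ha1⟩
      · rw [Finset.mem_image] at hc ⊢
        obtain ⟨z, hz, rfl⟩ := hc
        rw [Finset.mem_filter] at hz
        exact ⟨z, Finset.mem_filter.mpr ⟨Finset.mem_univ _, by omega⟩, rfl⟩
    have hcard := Finset.card_le_card hsub
    rw [Finset.card_insert_of_notMem (not_mem_rank_set ordf φ x)] at hcard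
    unfold rank at h
    omega
  · exact fo_inj ordf φ hord heq
  · exfalso
    obtain ⟨a, ha1, ha2⟩ := fo_spec ordf φ y
    have hfa : fo ordf φ a = fo ordf φ y := fo_congr ordf φ ha1
    have hsub : insert (φ y) ((univ.filter fun z => fo ordf φ z < fo ordf φ y).image φ)
        ⊆ (univ.filter fun z => fo ordf φ z < fo ordf φ x).image φ := by
      intro c hc
      rw [Finset.mem_insert] at hc
      rcases hc with rfl | hc
      · exact Finset.mem_image.mpr ⟨a, Finset.mem_filter.mpr ⟨Finset.mem_univ _, by omega⟩, ha1⟩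
      · rw [Finset.mem_image] at hc ⊢
        obtain ⟨z, hz, rfl⟩ := hc
        rw [Finset.mem_filter] at hz
        exact ⟨z, Finset.mem_filter.mpr ⟨Finset.mem_univ _, by omega⟩, rfl⟩
    have hcard := Finset.card_le_card hsub
    rw [Finset.card_insert_of_notMem (not_mem_rank_set ordf φ y)] at hcard
    unfold rank at h
    omega

end Rank

section Decoder
open Finset

variable (n : ℕ)

abbrev X := Fin n → Bool

noncomputable def ordX : X n → ℕ := fun x => (Fintype.equivFin (X n) x : ℕ)

lemma ordX_inj : Function.Injective (ordX n) := fun a b h =>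
  (Fintype.equivFin (X n)).injective (Fin.val_injective h)

lemma cardX : Fintype.card (X n) = 2 ^ n := by
  simp [X]

def Wn : ℕ := n ^ 2 / 8 + 1
def Mn : ℕ := n + Wn n + 2
def Ln : ℕ := Wn n * 2 ^ n / n + 1

abbrev Dc := (Fin (Wn n) → Fin (Mn n) → Bool) × (Fin (Ln n) → Bool) × (Fin n → Fin (Mn n))

def phiF (F : Fin (Mn n) → X n → Bool) (S : Fin (Mn n) → Bool) : X n → (Fin (Mn n) → Bool) :=
  fun x j => if S j = true then F j x else false

def kk (S : Fin (Mn n) → Bool) : ℕ := (univ.filter fun j => S j = true).card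

noncomputable def rk (F : Fin (Mn n) → X n → Bool) (S : Fin (Mn n) → Bool) (x : X n) : ℕ :=
  rank (ordX n) (phiF n F S) x

/-- the card of the image of `phiF F S` is at most `2 ^ kk S` -/
lemma card_image_phiF_le (F : Fin (Mn n) → X n → Bool) (S : Fin (Mn n) → Bool) :
    (univ.image (phiF n F S)).card ≤ 2 ^ kk n S := by
  classical
  set ψ : X n → ({j : Fin (Mn n) // S j = true} → Bool) := fun x j => F j.1 x with hψ
  set emb : ({j : Fin (Mn n) // S j = true} → Bool) → (Fin (Mn n) → Bool) :=
    fun g j => if h : S j = true then g ⟨j, h⟩ else false with hemb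
  have hcomp : phiF n F S = emb ∘ ψ := by
    funext x j
    by_cases h : S j = true <;> simp [phiF, hψ, hemb, h]
  have h1 : (univ.image (phiF n F S)).card ≤ (univ.image ψ).card := by
    rw [hcomp, ← Finset.image_image]
    exact Finset.card_image_le
  have h2 : (univ.image ψ).card ≤ Fintype.card ({j : Fin (Mn n) // S j = true} → Bool) := by
    simpa using Finset.card_le_univ (univ.image ψ)
  have h3 : Fintype.card ({j : Fin (Mn n) // S j = true} → Bool) = 2 ^ kk n S := by
    rw [Fintype.card_fun]
    simp [kk, Fintype.card_subtype]
  omega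

lemma rk_lt_pow (F : Fin (Mn n) → X n → Bool) (S : Fin (Mn n) → Bool) (x : X n) :
    rk n F S x < 2 ^ min (kk n S) n := by
  have h1 := rank_lt_card_image (ordX n) (phiF n F S) x
  have h2 := card_image_phiF_le n F S
  have h3 : (univ.image (phiF n F S)).card ≤ 2 ^ n := by
    calc (univ.image (phiF n F S)).card ≤ (univ : Finset (X n)).card := Finset.card_image_le
    _ = 2 ^ n := by rw [Finset.card_univ, cardX]
  rcases le_total (kk n S) n with h | h
  · rw [min_eq_left h]; unfold rk; omega
  · rw [min_eq_right h]; unfold rk; omega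

def offs (s : ℕ → Fin (Mn n) → Bool) (t : ℕ) : ℕ :=
  ∑ t' ∈ Finset.range t, 2 ^ min (kk n (s t')) n

lemma offs_mono (s : ℕ → Fin (Mn n) → Bool) {t t' : ℕ} (h : t ≤ t') :
    offs n s t ≤ offs n s t' :=
  Finset.sum_le_sum_of_subset (Finset.range_subset_range.mpr h)

lemma offs_succ (s : ℕ → Fin (Mn n) → Bool) (t : ℕ) :
    offs n s (t + 1) = offs n s t + 2 ^ min (kk n (s t)) n :=
  Finset.sum_range_succ _ _

/-- segment disjointness -/
lemma seg_disj (s : ℕ → Fin (Mn n) → Bool) {t t' r r' : ℕ}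
    (hr : r < 2 ^ min (kk n (s t)) n) (hr' : r' < 2 ^ min (kk n (s t')) n)
    (h : offs n s t + r = offs n s t' + r') : t = t' := by
  rcases lt_trichotomy t t' with hlt | heq | hgt
  · exfalso
    have h1 : offs n s (t + 1) ≤ offs n s t' := offs_mono n s hlt
    rw [offs_succ] at h1
    omega
  · exact heq
  · exfalso
    have h1 : offs n s (t' + 1) ≤ offs n s t := offs_mono n s hgt
    rw [offs_succ] at h1
    omega

def initF : Fin (Mn n) → X n → Bool := fun j x =>
  if (j : ℕ) = 0 then false
  else if (j : ℕ) = 1 then true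
  else if h : 2 ≤ (j : ℕ) ∧ (j : ℕ) < n + 2 then x ⟨(j : ℕ) - 2, by omega⟩
  else false

noncomputable def run (s : ℕ → Fin (Mn n) → Bool) (T : ℕ → Bool) :
    ℕ → Fin (Mn n) → X n → Bool
  | 0 => initF n
  | (t + 1) => fun j =>
      if (j : ℕ) = n + 2 + t then
        fun x => T (offs n s t + rk n (run s T t) (s t) x)
      else run s T t j

noncomputable def sExt (d : Dc n) : ℕ → Fin (Mn n) → Bool := fun t =>
  if h : t < Wn n then d.1 ⟨t, h⟩ else fun _ => false

noncomputable def tExt (d : Dc n) : ℕ → Bool := fun l =>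
  if h : l < Ln n then d.2.1 ⟨l, h⟩ else false

noncomputable def decode (d : Dc n) : X n → X n := fun x i =>
  run n (sExt n d) (tExt n d) (Wn n) (d.2.2 i) x

end Decoder

section Circuit
open Finset

variable {n m : ℕ} (Φ : GenCircuit n m)

def wired : Finset (Fin m) := univ.filter fun v => (Φ.pred v).Nonempty

def gnum : ℕ := (wired Φ).card

noncomputable def nodeOf (t : Fin (gnum Φ)) : Fin m :=
  ((wired Φ).orderIsoOfFin rfl t : Fin m)

noncomputable def idxOf (v : Fin m) (hv : v ∈ wired Φ) : Fin (gnum Φ) :=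
  ((wired Φ).orderIsoOfFin rfl).symm ⟨v, hv⟩

lemma nodeOf_mem (t : Fin (gnum Φ)) : nodeOf Φ t ∈ wired Φ :=
  (((wired Φ).orderIsoOfFin rfl) t).2

lemma nodeOf_idxOf (v : Fin m) (hv : v ∈ wired Φ) : nodeOf Φ (idxOf Φ v hv) = v := by
  unfold nodeOf idxOf
  rw [OrderIso.apply_symm_apply]

lemma idxOf_nodeOf (t : Fin (gnum Φ)) : idxOf Φ (nodeOf Φ t) (nodeOf_mem Φ t) = t := by
  unfold nodeOf idxOf
  have : (⟨((wired Φ).orderIsoOfFin rfl t : Fin m), nodeOf_mem Φ t⟩ :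
      {x // x ∈ wired Φ}) = (wired Φ).orderIsoOfFin rfl t := rfl
  rw [this]
  exact ((wired Φ).orderIsoOfFin rfl).symm_apply_apply t

lemma idxOf_lt_of_lt {u v : Fin m} (hu : u ∈ wired Φ) (hv : v ∈ wired Φ) (h : u < v) :
    idxOf Φ u hu < idxOf Φ v hv := by
  unfold idxOf
  exact ((wired Φ).orderIsoOfFin rfl).symm.strictMono (by exact h)

lemma wired_ge_n {v : Fin m} (hv : v ∈ wired Φ) : n ≤ (v : ℕ) := by
  by_contra h
  push_neg at h
  have h2 : (Φ.pred v).Nonempty := (Finset.mem_filter.mp hv).2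
  rw [Φ.pred_input v h] at h2
  exact Finset.not_nonempty_empty h2

def constVal (v : Fin m) : Bool := Φ.val (fun _ => false) v

lemma val_const {v : Fin m} (hv : v ∉ wired Φ) (hn : n ≤ (v : ℕ)) (x : X n) :
    Φ.val x v = constVal Φ v := by
  apply Φ.val_gate v hn
  intro j hj
  exfalso
  exact hv (Finset.mem_filter.mpr ⟨Finset.mem_univ _, ⟨j, hj⟩⟩)

noncomputable def slotOf (v : Fin m) : ℕ :=
  if (v : ℕ) < n then 2 + (v : ℕ)
  else if hv : v ∈ wired Φ then n + 2 + (idxOf Φ v hv : ℕ)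
  else if constVal Φ v then 1 else 0

lemma slotOf_lt_aux (v : Fin m) : slotOf Φ v < n + 2 + gnum Φ := by
  unfold slotOf
  split
  · omega
  · split
    · rename_i hv
      have := (idxOf Φ v ‹_›).isLt
      omega
    · split <;> omega

noncomputable def FcN (j : ℕ) : X n → Bool := fun x =>
  if j = 0 then false
  else if j = 1 then true
  else if h : 2 ≤ j ∧ j < n + 2 then x ⟨j - 2, by omega⟩
  else if h : j - (n + 2) < gnum Φ then Φ.val x (nodeOf Φ ⟨j - (n + 2), h⟩)
  else false

noncomputable def FcM : Fin (Mn n) → X n → Bool := fun j => FcN Φ (j : ℕ)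

lemma FcN_slotOf (v : Fin m) (x : X n) : FcN Φ (slotOf Φ v) x = Φ.val x v := by
  unfold slotOf
  split
  · -- input
    rename_i hv
    unfold FcN
    rw [if_neg (by omega : ¬ (2 + (v : ℕ) = 0)), if_neg (by omega : ¬ (2 + (v : ℕ) = 1)),
      dif_pos (by omega : 2 ≤ 2 + (v : ℕ) ∧ 2 + (v : ℕ) < n + 2), Φ.val_input x v hv]
    congr 1
    apply Fin.ext
    simp
  · split
    · -- wired gate
      rename_i hge hv
      unfold FcN
      rw [if_neg (by omega : ¬ (n + 2 + (idxOf Φ v hv : ℕ) = 0)),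
        if_neg (by omega : ¬ (n + 2 + (idxOf Φ v hv : ℕ) = 1)),
        dif_neg (by omega : ¬ (2 ≤ n + 2 + (idxOf Φ v hv : ℕ) ∧ n + 2 + (idxOf Φ v hv : ℕ) < n + 2))]
      have h3 : n + 2 + (idxOf Φ v hv : ℕ) - (n + 2) = (idxOf Φ v hv : ℕ) := by omega
      have h4 : (n + 2 + (idxOf Φ v hv : ℕ)) - (n + 2) < gnum Φ := by
        rw [h3]; exact (idxOf Φ v hv).isLt
      rw [dif_pos h4]
      have : (⟨n + 2 + (idxOf Φ v hv : ℕ) - (n + 2), h4⟩ : Fin (gnum Φ)) = idxOf Φ v hv := by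
        apply Fin.ext; simp [h3]
      rw [this, nodeOf_idxOf]
    · -- constant
      rename_i hge hv
      rw [val_const Φ hv (by omega)]
      rcases hb : constVal Φ v with _ | _
      · simp [FcN, hb]
      · simp [FcN, hb]

noncomputable def sC (t : ℕ) : Fin (Mn n) → Bool := fun j =>
  if h : t < gnum Φ then
    decide ((j : ℕ) ∈ (Φ.pred (nodeOf Φ ⟨t, h⟩)).image (slotOf Φ))
  else false

lemma sC_ge (t : ℕ) (h : ¬ t < gnum Φ) : sC Φ t = fun _ => false := by
  funext j; simp [sC, h]

lemma sC_eq_true_iff {t : ℕ} (ht : t < gnum Φ) (j : Fin (Mn n)) :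
    sC Φ t j = true ↔ ∃ u ∈ Φ.pred (nodeOf Φ ⟨t, ht⟩), slotOf Φ u = (j : ℕ) := by
  simp [sC, ht]

lemma gnum_le : gnum Φ ≤ Φ.size := by
  unfold gnum GenCircuit.size
  calc (wired Φ).card = ∑ v ∈ wired Φ, 1 := by rw [Finset.card_eq_sum_ones]
  _ ≤ ∑ v ∈ wired Φ, (Φ.pred v).card := by
      apply Finset.sum_le_sum
      intro v hv
      exact Finset.card_pos.mpr (Finset.mem_filter.mp hv).2
  _ ≤ ∑ v : Fin m, (Φ.pred v).card :=
      Finset.sum_le_sum_of_subset (Finset.subset_univ _)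

lemma slotOf_lt_Mn (hg : gnum Φ ≤ Wn n) (v : Fin m) : slotOf Φ v < Mn n := by
  have := slotOf_lt_aux Φ v
  unfold Mn
  omega

lemma kk_le {t : ℕ} (ht : t < gnum Φ) (hg : gnum Φ ≤ Wn n) :
    kk n (sC Φ t) ≤ (Φ.pred (nodeOf Φ ⟨t, ht⟩)).card := by
  unfold kk
  calc (univ.filter fun j : Fin (Mn n) => sC Φ t j = true).card
      ≤ ((Φ.pred (nodeOf Φ ⟨t, ht⟩)).image
          (fun u => (⟨slotOf Φ u, slotOf_lt_Mn Φ hg u⟩ : Fin (Mn n)))).card := by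
        apply Finset.card_le_card
        intro j hj
        rw [Finset.mem_filter] at hj
        obtain ⟨u, hu, hu2⟩ := (sC_eq_true_iff Φ ht j).mp hj.2
        exact Finset.mem_image.mpr ⟨u, hu, Fin.ext (by simp [hu2])⟩
  _ ≤ (Φ.pred (nodeOf Φ ⟨t, ht⟩)).card := Finset.card_image_le

lemma kk_pos {t : ℕ} (ht : t < gnum Φ) (hg : gnum Φ ≤ Wn n) :
    1 ≤ kk n (sC Φ t) := by
  have hne : (Φ.pred (nodeOf Φ ⟨t, ht⟩)).Nonempty :=
    (Finset.mem_filter.mp (nodeOf_mem Φ ⟨t, ht⟩)).2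
  obtain ⟨u, hu⟩ := hne
  apply Finset.card_pos.mpr
  exact ⟨⟨slotOf Φ u, slotOf_lt_Mn Φ hg u⟩,
    Finset.mem_filter.mpr ⟨Finset.mem_univ _, (sC_eq_true_iff Φ ht _).mpr ⟨u, hu, rfl⟩⟩⟩

lemma pow_min_le (k : ℕ) (hk : 1 ≤ k) : n * 2 ^ min k n ≤ k * 2 ^ n := by
  rcases le_total k n with h | h
  · rw [min_eq_left h]
    -- n * 2^k ≤ k * 2^n
    have hsplit : 2 ^ n = 2 ^ (n - k) * 2 ^ k := by
      rw [← pow_add]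
      congr 1
      omega
    rw [hsplit, ← mul_assoc]
    have h2 : n ≤ k * 2 ^ (n - k) := by
      have h3 : n - k + 1 ≤ 2 ^ (n - k) := Nat.lt_two_pow_self (n := n - k)
      calc n = k + (n - k) := by omega
      _ ≤ k + k * (n - k) := by nlinarith
      _ = k * (1 + (n - k)) := by ring
      _ ≤ k * 2 ^ (n - k) := by
          apply Nat.mul_le_mul_left
          have := Nat.lt_two_pow_self (n := n - k)
          omega
    exact Nat.mul_le_mul_right _ h2
  · rw [min_eq_right h]
    exact Nat.mul_le_mul_right _ h

lemma sum_kk_le (hg : gnum Φ ≤ Wn n) :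
    ∑ t ∈ Finset.range (gnum Φ), kk n (sC Φ t) ≤ Φ.size := by
  rw [Finset.sum_range fun t => kk n (sC Φ t)]
  calc ∑ t : Fin (gnum Φ), kk n (sC Φ (t : ℕ))
      ≤ ∑ t : Fin (gnum Φ), (Φ.pred (nodeOf Φ t)).card := by
        apply Finset.sum_le_sum
        intro t _
        have := kk_le Φ t.isLt hg
        simpa using this
  _ = ∑ v ∈ wired Φ, (Φ.pred v).card := by
        rw [← Finset.sum_coe_sort (wired Φ) (fun v => (Φ.pred v).card)]
        exact Fintype.sum_equiv ((wired Φ).orderIsoOfFin rfl).toEquiv _ _ (fun t => rfl)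
  _ ≤ ∑ v : Fin m, (Φ.pred v).card := Finset.sum_le_sum_of_subset (Finset.subset_univ _)

lemma offs_gnum_le (hn : 1 ≤ n) (hsz : Φ.size ≤ n ^ 2 / 8) :
    offs n (sC Φ) (gnum Φ) ≤ Wn n * 2 ^ n / n := by
  have hg : gnum Φ ≤ Wn n := by
    have h1 := gnum_le Φ
    unfold Wn
    omega
  rw [Nat.le_div_iff_mul_le hn]
  unfold offs
  calc (∑ t ∈ Finset.range (gnum Φ), 2 ^ min (kk n (sC Φ t)) n) * n
      = ∑ t ∈ Finset.range (gnum Φ), n * 2 ^ min (kk n (sC Φ t)) n := by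
        rw [Finset.sum_mul]
        congr 1
        funext t
        ring
  _ ≤ ∑ t ∈ Finset.range (gnum Φ), kk n (sC Φ t) * 2 ^ n := by
        apply Finset.sum_le_sum
        intro t ht
        exact pow_min_le (k := kk n (sC Φ t)) (kk_pos Φ (Finset.mem_range.mp ht) hg)
  _ = (∑ t ∈ Finset.range (gnum Φ), kk n (sC Φ t)) * 2 ^ n := by rw [Finset.sum_mul]
  _ ≤ (n ^ 2 / 8) * 2 ^ n := by
        apply Nat.mul_le_mul_right
        have := sum_kk_le Φ hg
        omega
  _ ≤ Wn n * 2 ^ n := by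
        apply Nat.mul_le_mul_right
        unfold Wn
        omega

lemma pred_slot_bound {t : ℕ} (ht : t < gnum Φ) {u : Fin m}
    (hu : u ∈ Φ.pred (nodeOf Φ ⟨t, ht⟩)) : slotOf Φ u < n + 2 + min t (gnum Φ) := by
  have hlt : u < nodeOf Φ ⟨t, ht⟩ := Φ.pred_lt _ u hu
  unfold slotOf
  split
  · omega
  · split
    · rename_i hge hv
      have h1 : idxOf Φ u hv < idxOf Φ (nodeOf Φ ⟨t, ht⟩) (nodeOf_mem Φ ⟨t, ht⟩) :=
        idxOf_lt_of_lt Φ hv (nodeOf_mem Φ ⟨t, ht⟩) hlt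
      rw [idxOf_nodeOf] at h1
      have h2 : (idxOf Φ u hv : ℕ) < t := h1
      have h3 := (idxOf Φ u hv).isLt
      omega
    · split <;> omega

lemma off_rk_lt_Ln (hn : 1 ≤ n) (hsz : Φ.size ≤ n ^ 2 / 8) {t : ℕ} (ht : t < gnum Φ)
    (x : X n) : offs n (sC Φ) t + rk n (FcM Φ) (sC Φ t) x < Ln n := by
  have h1 := rk_lt_pow n (FcM Φ) (sC Φ t) x
  have h2 : offs n (sC Φ) (t + 1) ≤ offs n (sC Φ) (gnum Φ) := offs_mono n _ ht
  rw [offs_succ] at h2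
  have h3 := offs_gnum_le Φ hn hsz
  unfold Ln
  omega

open Classical in
noncomputable def tblC : ℕ → Bool := fun l =>
  if h : ∃ p : Fin (gnum Φ) × X n,
      offs n (sC Φ) (p.1 : ℕ) + rk n (FcM Φ) (sC Φ (p.1 : ℕ)) p.2 = l
  then Φ.val h.choose.2 (nodeOf Φ h.choose.1) else false

lemma tblC_eq (hn : 1 ≤ n) (hsz : Φ.size ≤ n ^ 2 / 8) {t : ℕ} (ht : t < gnum Φ) (x : X n) :
    tblC Φ (offs n (sC Φ) t + rk n (FcM Φ) (sC Φ t) x) = Φ.val x (nodeOf Φ ⟨t, ht⟩) := by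
  have hg : gnum Φ ≤ Wn n := by
    have := gnum_le Φ; unfold Wn; omega
  have hex : ∃ p : Fin (gnum Φ) × X n,
      offs n (sC Φ) (p.1 : ℕ) + rk n (FcM Φ) (sC Φ (p.1 : ℕ)) p.2
        = offs n (sC Φ) t + rk n (FcM Φ) (sC Φ t) x := ⟨(⟨t, ht⟩, x), rfl⟩
  unfold tblC
  rw [dif_pos hex]
  have hch := hex.choose_spec
  have hp1 : (hex.choose.1 : ℕ) = t := by
    apply seg_disj n (sC Φ) (r := rk n (FcM Φ) (sC Φ (hex.choose.1 : ℕ)) hex.choose.2)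
      (r' := rk n (FcM Φ) (sC Φ t) x)
    · exact rk_lt_pow n _ _ _
    · exact rk_lt_pow n _ _ _
    · exact hch
  rw [hp1] at hch
  have hrk : rk n (FcM Φ) (sC Φ t) hex.choose.2 = rk n (FcM Φ) (sC Φ t) x := by omega
  have hphi : phiF n (FcM Φ) (sC Φ t) hex.choose.2 = phiF n (FcM Φ) (sC Φ t) x :=
    rank_inj (ordX n) (phiF n (FcM Φ) (sC Φ t)) (ordX_inj n) hrk
  have hval : Φ.val hex.choose.2 (nodeOf Φ ⟨t, ht⟩) = Φ.val x (nodeOf Φ ⟨t, ht⟩) := by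
    apply Φ.val_gate _ (wired_ge_n Φ (nodeOf_mem Φ ⟨t, ht⟩))
    intro u hu
    have hslot : slotOf Φ u < Mn n := slotOf_lt_Mn Φ hg u
    have hsj : sC Φ t ⟨slotOf Φ u, hslot⟩ = true :=
      (sC_eq_true_iff Φ ht _).mpr ⟨u, hu, rfl⟩
    have hcf := congrFun hphi ⟨slotOf Φ u, hslot⟩
    unfold phiF at hcf
    rw [if_pos hsj, if_pos hsj] at hcf
    have e1 : FcM Φ ⟨slotOf Φ u, hslot⟩ hex.choose.2 = Φ.val hex.choose.2 u :=
      FcN_slotOf Φ u hex.choose.2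
    have e2 : FcM Φ ⟨slotOf Φ u, hslot⟩ x = Φ.val x u := FcN_slotOf Φ u x
    rw [e1, e2] at hcf
    exact hcf
  have hp1' : hex.choose.1 = ⟨t, ht⟩ := Fin.ext hp1
  rw [hp1']
  exact hval

lemma FcN_gate {t : ℕ} (ht : t < gnum Φ) (x : X n) :
    FcN Φ (n + 2 + t) x = Φ.val x (nodeOf Φ ⟨t, ht⟩) := by
  unfold FcN
  rw [if_neg (by omega : ¬ (n + 2 + t = 0)), if_neg (by omega : ¬ (n + 2 + t = 1)),
    dif_neg (by omega : ¬ (2 ≤ n + 2 + t ∧ n + 2 + t < n + 2))]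
  have h4 : n + 2 + t - (n + 2) < gnum Φ := by omega
  rw [dif_pos h4]
  congr 1
  apply Fin.ext
  simp

lemma run_eq (hn : 1 ≤ n) (hsz : Φ.size ≤ n ^ 2 / 8) :
    ∀ (t : ℕ) (j : Fin (Mn n)), (j : ℕ) < n + 2 + min t (gnum Φ) →
      run n (sC Φ) (tblC Φ) t j = FcM Φ j := by
  intro t
  induction t with
  | zero =>
    intro j hj
    have hj2 : (j : ℕ) < n + 2 := by omega
    funext x
    show initF n j x = FcN Φ (j : ℕ) x
    unfold initF FcN
    by_cases h0 : (j : ℕ) = 0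
    · rw [if_pos h0, if_pos h0]
    · rw [if_neg h0, if_neg h0]
      by_cases h1 : (j : ℕ) = 1
      · rw [if_pos h1, if_pos h1]
      · rw [if_neg h1, if_neg h1,
          dif_pos (by omega : 2 ≤ (j : ℕ) ∧ (j : ℕ) < n + 2),
          dif_pos (by omega : 2 ≤ (j : ℕ) ∧ (j : ℕ) < n + 2)]
  | succ t IH =>
    intro j hj
    show (if (j : ℕ) = n + 2 + t then
        fun x => tblC Φ (offs n (sC Φ) t + rk n (run n (sC Φ) (tblC Φ) t) (sC Φ t) x)
      else run n (sC Φ) (tblC Φ) t j) = FcM Φ j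
    by_cases hjt : (j : ℕ) = n + 2 + t
    · rw [if_pos hjt]
      have ht : t < gnum Φ := by omega
      funext x
      have hphi : phiF n (run n (sC Φ) (tblC Φ) t) (sC Φ t) = phiF n (FcM Φ) (sC Φ t) := by
        funext y j'
        unfold phiF
        by_cases hs : sC Φ t j' = true
        · rw [if_pos hs, if_pos hs]
          have hcond : (j' : ℕ) < n + 2 + min t (gnum Φ) := by
            obtain ⟨u, hu, hu2⟩ := (sC_eq_true_iff Φ ht j').mp hs
            have := pred_slot_bound Φ ht hu
            omega
          rw [IH j' hcond]
        · rw [if_neg hs, if_neg hs]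
      have hrk : rk n (run n (sC Φ) (tblC Φ) t) (sC Φ t) x = rk n (FcM Φ) (sC Φ t) x := by
        unfold rk
        rw [hphi]
      rw [hrk, tblC_eq Φ hn hsz ht x]
      show _ = FcN Φ (j : ℕ) x
      rw [hjt, FcN_gate Φ ht x]
    · rw [if_neg hjt]
      exact IH j (by omega)

set_option maxHeartbeats 1000000 in
lemma exists_code (hn : 1 ≤ n) (f : X n → X n) (hC : Φ.Computes f)
    (hsz : Φ.size ≤ n ^ 2 / 8) : ∃ d : Dc n, decode n d = f := by
  have hg : gnum Φ ≤ Wn n := by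
    have := gnum_le Φ; unfold Wn; omega
  set d : Dc n := ⟨fun t => sC Φ (t : ℕ), fun l => tblC Φ (l : ℕ),
    fun i => ⟨slotOf Φ (Φ.out i), slotOf_lt_Mn Φ hg _⟩⟩ with hd
  refine ⟨d, ?_⟩
  have hs : sExt n d = sC Φ := by
    funext t
    unfold sExt
    split
    · rfl
    · rename_i h
      rw [sC_ge Φ t (by omega : ¬ t < gnum Φ)]
  have htb : tExt n d = tblC Φ := by
    funext l
    unfold tExt
    split
    · rfl
    · rename_i h
      symm
      unfold tblC
      rw [dif_neg]
      rintro ⟨p, hp⟩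
      have := off_rk_lt_Ln Φ hn hsz p.1.isLt p.2
      omega
  unfold decode
  rw [hs, htb]
  funext x i
  have hcond : (slotOf Φ (Φ.out i)) < n + 2 + min (Wn n) (gnum Φ) := by
    have := slotOf_lt_aux Φ (Φ.out i)
    omega
  have hrun := run_eq Φ hn hsz (Wn n) ⟨slotOf Φ (Φ.out i), slotOf_lt_Mn Φ hg _⟩ hcond
  have : d.2.2 i = ⟨slotOf Φ (Φ.out i), slotOf_lt_Mn Φ hg _⟩ := rfl
  rw [this, hrun]
  show FcN Φ (slotOf Φ (Φ.out i)) x = f x i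
  rw [FcN_slotOf Φ (Φ.out i) x, hC x i]

end Circuit
section Counting
open Finset

lemma pow5 (n : ℕ) (hn : 32 ≤ n) : 16 * n ^ 5 ≤ 2 ^ n := by
  induction n, hn using Nat.le_induction with
  | base => norm_num
  | succ k hk IH =>
      have f4 : 32 * k ^ 4 ≤ k ^ 5 := by
        calc 32 * k ^ 4 ≤ k * k ^ 4 := Nat.mul_le_mul_right _ hk
        _ = k ^ 5 := by ring
      have f3 : 32 * k ^ 3 ≤ k ^ 4 := by
        calc 32 * k ^ 3 ≤ k * k ^ 3 := Nat.mul_le_mul_right _ hk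
        _ = k ^ 4 := by ring
      have f2 : 32 * k ^ 2 ≤ k ^ 3 := by
        calc 32 * k ^ 2 ≤ k * k ^ 2 := Nat.mul_le_mul_right _ hk
        _ = k ^ 3 := by ring
      have f1 : 32 * k ≤ k ^ 2 := by
        calc 32 * k ≤ k * k := Nat.mul_le_mul_right _ hk
        _ = k ^ 2 := by ring
      have e : (k + 1) ^ 5 = k ^ 5 + 5 * k ^ 4 + 10 * k ^ 3 + 10 * k ^ 2 + 5 * k + 1 := by
        ring
      have h1 : (k + 1) ^ 5 ≤ 2 * k ^ 5 := by omega
      calc 16 * (k + 1) ^ 5 ≤ 16 * (2 * k ^ 5) := by omega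
      _ = 2 * (16 * k ^ 5) := by ring
      _ ≤ 2 * 2 ^ k := by omega
      _ = 2 ^ (k + 1) := by ring

set_option maxHeartbeats 1000000 in
lemma card_Dc_lt (n : ℕ) (hn : 32 ≤ n) :
    Fintype.card (Dc n) < Fintype.card (X n → X n) := by
  have hE : 16 * n ^ 5 ≤ 2 ^ n := pow5 n hn
  have hE1 : 1 ≤ 2 ^ n := Nat.one_le_two_pow
  have ha8 : 8 * (n ^ 2 / 8) ≤ n ^ 2 := by omega
  set a : ℕ := n ^ 2 / 8 with hadef
  have ha : a ≤ n ^ 2 := by omega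
  have hn1 : 1 ≤ n := by omega
  have hn2 : n ≤ n ^ 2 := by
    calc n = n ^ 1 := (pow_one n).symm
    _ ≤ n ^ 2 := Nat.pow_le_pow_right hn1 (by norm_num)
  have hn25 : n ^ 2 ≤ n ^ 5 := Nat.pow_le_pow_right hn1 (by norm_num)
  have hn35 : n ^ 3 ≤ n ^ 5 := Nat.pow_le_pow_right hn1 (by norm_num)
  have hn15 : n ≤ n ^ 5 := by
    calc n = n ^ 1 := (pow_one n).symm
    _ ≤ n ^ 5 := Nat.pow_le_pow_right hn1 (by norm_num)
  -- cardinalities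
  have hc1 : Fintype.card (Dc n) = 2 ^ (Mn n * Wn n + Ln n) * Mn n ^ n := by
    simp only [Dc, Fintype.card_prod, Fintype.card_fun, Fintype.card_bool, Fintype.card_fin]
    rw [← pow_mul, ← mul_assoc, ← pow_add]
  have hc2 : Fintype.card (X n → X n) = 2 ^ (n * 2 ^ n) := by
    rw [Fintype.card_fun, cardX, ← pow_mul]
  rw [hc1, hc2]
  have hMn_eq : Mn n = n + a + 3 := by unfold Mn Wn; omega
  have hWn_eq : Wn n = a + 1 := by unfold Wn; omega
  -- bound Mn ^ n
  have hM2 : Mn n ≤ 2 * n ^ 2 := by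
    rw [hMn_eq]
    nlinarith
  have hMle : Mn n ≤ 2 ^ n := by
    have : 2 * n ^ 2 ≤ 16 * n ^ 5 := by omega
    omega
  have hMpow : Mn n ^ n ≤ 2 ^ (n * n) := by
    calc Mn n ^ n ≤ (2 ^ n) ^ n := Nat.pow_le_pow_left hMle n
    _ = 2 ^ (n * n) := by rw [← pow_mul]
  have hLn : n * Ln n ≤ Wn n * 2 ^ n + n := by
    unfold Ln
    have h := Nat.div_mul_le_self (Wn n * 2 ^ n) n
    calc n * (Wn n * 2 ^ n / n + 1) = (Wn n * 2 ^ n / n) * n + n := by ring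
    _ ≤ Wn n * 2 ^ n + n := by omega
  have hexp : Mn n * Wn n + Ln n + n * n < n * 2 ^ n := by
    have h1 : n * (Mn n * Wn n) ≤ 4 * n ^ 5 := by
      have u1 : Mn n ≤ 2 * n ^ 2 := hM2
      have u2 : Wn n ≤ 2 * n ^ 2 := by rw [hWn_eq]; nlinarith
      calc n * (Mn n * Wn n) ≤ n * ((2 * n ^ 2) * (2 * n ^ 2)) :=
        Nat.mul_le_mul_left n (Nat.mul_le_mul u1 u2)
      _ = 4 * n ^ 5 := by ring
    have h2 : 8 * (Wn n * 2 ^ n) ≤ (n ^ 2 + 8) * 2 ^ n := by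
      have : 8 * Wn n ≤ n ^ 2 + 8 := by rw [hWn_eq]; omega
      calc 8 * (Wn n * 2 ^ n) = (8 * Wn n) * 2 ^ n := by ring
      _ ≤ (n ^ 2 + 8) * 2 ^ n := Nat.mul_le_mul_right _ this
    have h7 : (n ^ 2 + 11) * 2 ^ n < 8 * n ^ 2 * 2 ^ n := by
      have h8 : n ^ 2 + 11 < 8 * n ^ 2 := by nlinarith
      exact (Nat.mul_lt_mul_right (by omega : 0 < 2 ^ n)).mpr h8
    have hkey : n * (Mn n * Wn n + Ln n + n * n) < n * (n * 2 ^ n) := by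
      have e1 : n * (Mn n * Wn n + Ln n + n * n)
          = n * (Mn n * Wn n) + n * Ln n + n ^ 3 := by ring
      have e3 : n * (n * 2 ^ n) = n ^ 2 * 2 ^ n := by ring
      have h5 : 8 * n ^ 3 + 8 * n ≤ 16 * n ^ 5 := by omega
      have h9 : 8 * (n * (Mn n * Wn n + Ln n + n * n)) < 8 * (n * (n * 2 ^ n)) := by
        have c1 : 8 * (n * (Mn n * Wn n + Ln n + n * n))
            ≤ 32 * n ^ 5 + (8 * (Wn n * 2 ^ n) + 8 * n) + 8 * n ^ 3 := by
          rw [e1]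
          omega
        have c2 : 32 * n ^ 5 + ((n ^ 2 + 8) * 2 ^ n + 8 * n) + 8 * n ^ 3
            ≤ 2 * 2 ^ n + (n ^ 2 + 8) * 2 ^ n + 2 ^ n := by omega
        have c3 : 2 * 2 ^ n + (n ^ 2 + 8) * 2 ^ n + 2 ^ n = (n ^ 2 + 11) * 2 ^ n := by ring
        have c4 : 8 * (n * (n * 2 ^ n)) = 8 * n ^ 2 * 2 ^ n := by ring
        omega
      omega
    exact Nat.lt_of_mul_lt_mul_left hkey
  calc 2 ^ (Mn n * Wn n + Ln n) * Mn n ^ n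
      ≤ 2 ^ (Mn n * Wn n + Ln n) * 2 ^ (n * n) := Nat.mul_le_mul_left _ hMpow
  _ = 2 ^ (Mn n * Wn n + Ln n + n * n) := by rw [← pow_add]
  _ < 2 ^ (n * 2 ^ n) := Nat.pow_lt_pow_right (by norm_num) hexp

set_option maxHeartbeats 1000000 in
lemma main_lemma (n : ℕ) (hn : 32 ≤ n) :
    ∃ f : X n → X n, ∀ (m : ℕ) (Φ : GenCircuit n m), Φ.Computes f →
      ¬ (Φ.size ≤ n ^ 2 / 8) := by
  by_contra h
  push_neg at h
  have hsurj : Function.Surjective (decode n) := by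
    intro f
    obtain ⟨m, Φ, hC, hsz⟩ := h f
    exact exists_code Φ (by omega) f hC hsz
  have h1 := Fintype.card_le_of_surjective _ hsurj
  have h2 := card_Dc_lt n hn
  omega

end Counting

end QuadLB

/-- There exist `n`-operators requiring `Ω(n²)` wires in any general circuit. -/
theorem exists_operator_requiring_quadratic_wires :
    ∃ c : ℝ, c > 0 ∧ ∃ N : ℕ, ∀ n ≥ N,
      ∃ f : (Fin n → Bool) → (Fin n → Bool),
        ∀ (m : ℕ) (Φ : GenCircuit n m), Φ.Computes f →
          c * (n : ℝ) ^ 2 ≤ (Φ.size : ℝ) := by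
  refine ⟨1 / 8, by norm_num, 32, ?_⟩
  intro n hn
  obtain ⟨f, hf⟩ := QuadLB.main_lemma n hn
  refine ⟨f, ?_⟩
  intro m Φ hC
  have h1 := hf m Φ hC
  have h2 : n ^ 2 / 8 + 1 ≤ Φ.size := by omega
  have h3 : (n : ℝ) ^ 2 < 8 * ((n ^ 2 / 8 + 1 : ℕ) : ℝ) := by
    have h4 : n ^ 2 < 8 * (n ^ 2 / 8 + 1) := by omega
    calc (n : ℝ) ^ 2 = ((n ^ 2 : ℕ) : ℝ) := by push_cast; ring
    _ < ((8 * (n ^ 2 / 8 + 1) : ℕ) : ℝ) := by exact_mod_cast h4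
    _ = 8 * ((n ^ 2 / 8 + 1 : ℕ) : ℝ) := by push_cast; ring
  have h5 : ((n ^ 2 / 8 + 1 : ℕ) : ℝ) ≤ (Φ.size : ℝ) := Nat.cast_le.mpr h2
  linarith
end

section
/- There is a constant c > 0 and N : ℕ such that for every n ≥ N, the cardinality of the set of n-operators f : (Fin n → Bool) → (Fin n → Bool) that are computable by some general boolean circuit on n inputs of size at most c * n^2 is at most 2^(n * 2^n) / 2^(2^(n-1)); in particular, the fraction of n-operators computable with at most c * n^2 wires tends to 0 (almost all n-operators require more than c * n^2 wires). -/
namespace ShannonGC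
open Finset

noncomputable def εX (n : ℕ) : (Fin n → Bool) ≃ Fin (2 ^ n) :=
  Fintype.equivFinOfCardEq (by simp)

noncomputable def εP {n M : ℕ} (P : Finset (Fin n ⊕ Fin M)) : (↥P → Bool) ≃ Fin (2 ^ P.card) :=
  Fintype.equivFinOfCardEq (by simp)

noncomputable def decB {n M : ℕ} (p : Fin M → Finset (Fin n ⊕ Fin M))
    (d : ∀ i : Fin M, Fin (2 ^ min (p i).card n) → Bool)
    (x : Fin n → Bool) : ℕ → Fin n ⊕ Fin M → Bool
  | _, .inl k => x k
  | 0, .inr _ => false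
  | fuel + 1, .inr i =>
    if hc : (p i).card ≤ n then
      d i (Fin.cast (by rw [min_eq_left hc]) ((εP (p i)) (fun j => decB p d x fuel j.1)))
    else
      d i (Fin.cast (by rw [min_eq_right (le_of_not_ge hc)]) (εX n x))

abbrev EncT (n M s : ℕ) : Type :=
  Σ p : {p : Fin M → Finset (Fin n ⊕ Fin M) // ∑ i, (p i).card ≤ s},
    (∀ i : Fin M, Fin (2 ^ min (p.1 i).card n) → Bool) × (Fin n → Fin n ⊕ Fin M)

noncomputable def decode {n M s : ℕ} (E : EncT n M s) : (Fin n → Bool) → Fin n → Bool :=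
  fun x k => decB E.1.1 E.2.1 x M (E.2.2 k)



variable {n m : ℕ} (Φ : GenCircuit n m) (M : ℕ)

open Classical in
noncomputable def RelSet : Finset (Fin m) :=
  Finset.univ.filter (fun u => n ≤ (u : ℕ) ∧
    ∃ k, Relation.ReflTransGen (fun a b => a ∈ Φ.pred b) u (Φ.out k))

lemma mem_RelSet {u : Fin m} : u ∈ RelSet Φ ↔ n ≤ (u : ℕ) ∧
    ∃ k, Relation.ReflTransGen (fun a b => a ∈ Φ.pred b) u (Φ.out k) := by
  simp [RelSet]

lemma relSet_out {k : Fin n} (h : n ≤ (Φ.out k : ℕ)) : Φ.out k ∈ RelSet Φ :=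
  (mem_RelSet Φ).2 ⟨h, k, Relation.ReflTransGen.refl⟩

lemma relSet_closed {u j : Fin m} (hu : u ∈ RelSet Φ) (hj : j ∈ Φ.pred u)
    (hjn : n ≤ (j : ℕ)) : j ∈ RelSet Φ := by
  obtain ⟨-, k, hk⟩ := (mem_RelSet Φ).1 hu
  exact (mem_RelSet Φ).2 ⟨hjn, k, Relation.ReflTransGen.head hj hk⟩

lemma card_RelSet_le : (RelSet Φ).card ≤ n + Φ.size := by
  classical
  have hsub : RelSet Φ ⊆ (Finset.univ.image Φ.out) ∪ Finset.univ.biUnion Φ.pred := by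
    intro u hu
    obtain ⟨-, k, hk⟩ := (mem_RelSet Φ).1 hu
    rcases hk.cases_head with h | ⟨b, hb, -⟩
    · exact Finset.mem_union_left _ (Finset.mem_image.2 ⟨k, Finset.mem_univ _, h.symm⟩)
    · exact Finset.mem_union_right _ (Finset.mem_biUnion.2 ⟨b, Finset.mem_univ _, hb⟩)
  calc (RelSet Φ).card ≤ _ := Finset.card_le_card hsub
    _ ≤ (Finset.univ.image Φ.out).card + (Finset.univ.biUnion Φ.pred).card :=
        Finset.card_union_le _ _
    _ ≤ n + Φ.size := by
        gcongr
        · exact (Finset.card_image_le).trans (by simp)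
        · exact (Finset.card_biUnion_le).trans le_rfl

noncomputable def eIso : Fin (RelSet Φ).card ≃o ↥(RelSet Φ) := (RelSet Φ).orderIsoOfFin rfl

def liftF (hM : (RelSet Φ).card ≤ M) (j : Fin (RelSet Φ).card) : Fin M :=
  ⟨j.1, lt_of_lt_of_le j.2 hM⟩

noncomputable def φmap (hM : (RelSet Φ).card ≤ M) (hn : 0 < n) (u : Fin m) : Fin n ⊕ Fin M :=
  if h : (u : ℕ) < n then .inl ⟨u.1, h⟩
  else if hR : u ∈ RelSet Φ then .inr (liftF Φ M hM ((eIso Φ).symm ⟨u, hR⟩))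
  else .inl ⟨0, hn⟩

noncomputable def pmap (hM : (RelSet Φ).card ≤ M) (hn : 0 < n) (i : Fin M) : Finset (Fin n ⊕ Fin M) :=
  if h : (i : ℕ) < (RelSet Φ).card then
    (Φ.pred ((eIso Φ) ⟨i.1, h⟩)).image (φmap Φ M hM hn) else ∅

noncomputable def evalA (y : Fin n → Bool) : Fin n ⊕ Fin M → Bool :=
  Sum.elim y (fun i => if h : (i : ℕ) < (RelSet Φ).card then Φ.val y ((eIso Φ) ⟨i.1, h⟩) else false)

open Classical in
noncomputable def gfun (hM : (RelSet Φ).card ≤ M) (hn : 0 < n) (i : Fin M)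
    (h : (i : ℕ) < (RelSet Φ).card) (t : ↥(pmap Φ M hM hn i) → Bool) : Bool :=
  if hex : ∃ y, ∀ a (ha : a ∈ pmap Φ M hM hn i), evalA Φ M y a = t ⟨a, ha⟩
  then Φ.val hex.choose ((eIso Φ) ⟨i.1, h⟩) else false

noncomputable def dmap (hM : (RelSet Φ).card ≤ M) (hn : 0 < n) (i : Fin M) :
    Fin (2 ^ min (pmap Φ M hM hn i).card n) → Bool :=
  if h : (i : ℕ) < (RelSet Φ).card then
    if hc : (pmap Φ M hM hn i).card ≤ n then
      fun v => gfun Φ M hM hn i h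
        ((εP (pmap Φ M hM hn i)).symm (Fin.cast (by rw [min_eq_left hc]) v))
    else
      fun v => Φ.val ((εX n).symm (Fin.cast (by rw [min_eq_right (le_of_not_ge hc)]) v))
        ((eIso Φ) ⟨i.1, h⟩)
  else fun _ => false

noncomputable def omap (hM : (RelSet Φ).card ≤ M) (hn : 0 < n) (k : Fin n) : Fin n ⊕ Fin M :=
  φmap Φ M hM hn (Φ.out k)

lemma evalA_φmap (hM : (RelSet Φ).card ≤ M) (hn : 0 < n) (y : Fin n → Bool) (u : Fin m)
    (hu : (u : ℕ) < n ∨ u ∈ RelSet Φ) :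
    evalA Φ M y (φmap Φ M hM hn u) = Φ.val y u := by
  unfold φmap
  by_cases h : (u : ℕ) < n
  · rw [dif_pos h]
    simp [evalA, (Φ.val_input y u h).symm]
  · rw [dif_neg h]
    have hR : u ∈ RelSet Φ := hu.resolve_left h
    rw [dif_pos hR]
    have hlt : ((liftF Φ M hM ((eIso Φ).symm ⟨u, hR⟩) : Fin M) : ℕ) < (RelSet Φ).card :=
      ((eIso Φ).symm ⟨u, hR⟩).2
    simp only [evalA, Sum.elim_inr, dif_pos hlt]
    congr 1
    have : (⟨((liftF Φ M hM ((eIso Φ).symm ⟨u, hR⟩) : Fin M) : ℕ), hlt⟩ : Fin (RelSet Φ).card)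
        = (eIso Φ).symm ⟨u, hR⟩ := by
      apply Fin.ext; rfl
    rw [this, OrderIso.apply_symm_apply]

lemma decB_inl {n M : ℕ} (p : Fin M → Finset (Fin n ⊕ Fin M))
    (d : ∀ i : Fin M, Fin (2 ^ min (p i).card n) → Bool)
    (x : Fin n → Bool) (fuel : ℕ) (k : Fin n) :
    decB p d x fuel (.inl k) = x k := by
  cases fuel <;> simp [decB]

lemma sum_card_pmap (hM : (RelSet Φ).card ≤ M) (hn : 0 < n) :
    ∑ i : Fin M, (pmap Φ M hM hn i).card ≤ Φ.size := by
  classical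
  have hinj : ∀ a ∈ (Finset.univ : Finset (Fin (RelSet Φ).card)), ∀ b ∈ Finset.univ,
      liftF Φ M hM a = liftF Φ M hM b → a = b := by
    intro a _ b _ hab
    rw [Fin.ext_iff] at hab ⊢
    simpa [liftF] using hab
  have h0 : ∀ i ∈ (Finset.univ : Finset (Fin M)),
      i ∉ Finset.univ.image (liftF Φ M hM) → (pmap Φ M hM hn i).card = 0 := by
    intro i _ hi
    have : ¬ ((i : ℕ) < (RelSet Φ).card) := by
      intro h
      exact hi (Finset.mem_image.2 ⟨⟨i.1, h⟩, Finset.mem_univ _, Fin.ext rfl⟩)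
    simp [pmap, dif_neg this]
  calc ∑ i : Fin M, (pmap Φ M hM hn i).card
      = ∑ i ∈ Finset.univ.image (liftF Φ M hM), (pmap Φ M hM hn i).card :=
        (Finset.sum_subset (Finset.subset_univ _) h0).symm
    _ = ∑ j : Fin (RelSet Φ).card, (pmap Φ M hM hn (liftF Φ M hM j)).card :=
        Finset.sum_image hinj
    _ ≤ ∑ j : Fin (RelSet Φ).card, (Φ.pred ((eIso Φ) j)).card := by
        apply Finset.sum_le_sum
        intro j _
        have hj : ((liftF Φ M hM j : Fin M) : ℕ) < (RelSet Φ).card := j.2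
        rw [pmap, dif_pos hj]
        exact Finset.card_image_le
    _ = ∑ u : ↥(RelSet Φ), (Φ.pred u).card :=
        Fintype.sum_equiv (eIso Φ).toEquiv _ _ (fun j => rfl)
    _ = ∑ u ∈ RelSet Φ, (Φ.pred u).card := Finset.sum_coe_sort (RelSet Φ) (fun u => (Φ.pred u).card)
    _ ≤ ∑ u : Fin m, (Φ.pred u).card :=
        Finset.sum_le_sum_of_subset (Finset.subset_univ _)
    _ = Φ.size := rfl

lemma decB_correct (hM : (RelSet Φ).card ≤ M) (hn : 0 < n) (x : Fin n → Bool) :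
    ∀ fuel (j : Fin (RelSet Φ).card), (j : ℕ) < fuel →
      decB (pmap Φ M hM hn) (dmap Φ M hM hn) x fuel (.inr (liftF Φ M hM j))
        = Φ.val x ((eIso Φ) j) := by
  intro fuel
  induction fuel with
  | zero => intro j hj; omega
  | succ fuel IH =>
    intro j hj
    set i : Fin M := liftF Φ M hM j with hidef
    have hi : (i : ℕ) < (RelSet Φ).card := j.2
    have hieq : ((eIso Φ) ⟨i.1, hi⟩ : Fin m) = ((eIso Φ) j : Fin m) := rfl
    have hpe : pmap Φ M hM hn i = (Φ.pred ((eIso Φ) j)).image (φmap Φ M hM hn) := by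
      rw [pmap, dif_pos hi]
      rfl
    have hu_mem : ((eIso Φ) j : Fin m) ∈ RelSet Φ := ((eIso Φ) j).2
    have hun : n ≤ (((eIso Φ) j : Fin m) : ℕ) := ((mem_RelSet Φ).1 hu_mem).1
    -- predecessors are input-or-relevant
    have hpre : ∀ w ∈ Φ.pred ((eIso Φ) j : Fin m), (w : ℕ) < n ∨ w ∈ RelSet Φ := by
      intro w hw
      by_cases hwn : (w : ℕ) < n
      · exact Or.inl hwn
      · exact Or.inr (relSet_closed Φ hu_mem hw (not_lt.1 hwn))
    -- recursive values agree with evalA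
    have ht : ∀ a ∈ pmap Φ M hM hn i,
        decB (pmap Φ M hM hn) (dmap Φ M hM hn) x fuel a = evalA Φ M x a := by
      intro a ha
      rw [hpe] at ha
      obtain ⟨w, hw, rfl⟩ := Finset.mem_image.1 ha
      by_cases hwn : (w : ℕ) < n
      · rw [φmap, dif_pos hwn]
        rw [decB_inl]
        simp [evalA]
      · have hwR : w ∈ RelSet Φ := relSet_closed Φ hu_mem hw (not_lt.1 hwn)
        rw [φmap, dif_neg hwn, dif_pos hwR]
        set j' : Fin (RelSet Φ).card := (eIso Φ).symm ⟨w, hwR⟩ with hj'def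
        have hlt : j' < j := by
          have h1 : (⟨w, hwR⟩ : ↥(RelSet Φ)) < (eIso Φ) j := by
            rw [← Subtype.coe_lt_coe]
            exact Φ.pred_lt _ w hw
          have := (eIso Φ).symm.lt_iff_lt.2 h1
          rwa [OrderIso.symm_apply_apply] at this
        have hj' : (j' : ℕ) < fuel := by
          have := Fin.lt_iff_val_lt_val.1 hlt
          omega
        rw [IH j' hj']
        have hj'2 : ((liftF Φ M hM j' : Fin M) : ℕ) < (RelSet Φ).card := j'.2
        simp only [evalA, Sum.elim_inr, dif_pos hj'2]
        rfl
    -- unfold one step of decB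
    rw [show (Sum.inr i : Fin n ⊕ Fin M) = Sum.inr i from rfl]
    rw [decB]
    by_cases hc : (pmap Φ M hM hn i).card ≤ n
    · rw [dif_pos hc, dmap, dif_pos hi, dif_pos hc]
      have hcast : ∀ (v : Fin (2 ^ (pmap Φ M hM hn i).card))
          (h1 : 2 ^ (pmap Φ M hM hn i).card = 2 ^ min (pmap Φ M hM hn i).card n)
          (h2 : 2 ^ min (pmap Φ M hM hn i).card n = 2 ^ (pmap Φ M hM hn i).card),
          Fin.cast h2 (Fin.cast h1 v) = v := by
        intro v h1 h2; apply Fin.ext; simp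
      rw [hcast, Equiv.symm_apply_apply]
      have hex : ∃ y, ∀ a (ha : a ∈ pmap Φ M hM hn i),
          evalA Φ M y a = decB (pmap Φ M hM hn) (dmap Φ M hM hn) x fuel a := by
        exact ⟨x, fun a ha => (ht a ha).symm⟩
      rw [gfun, dif_pos hex]
      have hspec := hex.choose_spec
      refine Φ.val_gate ((eIso Φ) j : Fin m) hun hex.choose x ?_
      intro w hw
      have hmem : φmap Φ M hM hn w ∈ pmap Φ M hM hn i := by
        rw [hpe]; exact Finset.mem_image_of_mem _ hw
      have h1 := hspec (φmap Φ M hM hn w) hmem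
      rw [ht _ hmem] at h1
      rw [← evalA_φmap Φ M hM hn hex.choose w (hpre w hw),
          ← evalA_φmap Φ M hM hn x w (hpre w hw)]
      exact h1
    · rw [dif_neg hc, dmap, dif_pos hi, dif_neg hc]
      have hcast : ∀ (v : Fin (2 ^ n))
          (h1 : 2 ^ n = 2 ^ min (pmap Φ M hM hn i).card n)
          (h2 : 2 ^ min (pmap Φ M hM hn i).card n = 2 ^ n),
          Fin.cast h2 (Fin.cast h1 v) = v := by
        intro v h1 h2; apply Fin.ext; simp
      rw [hcast, Equiv.symm_apply_apply]
      rfl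

lemma exists_enc {n m M s : ℕ} (hn : 0 < n) (Φ : GenCircuit n m)
    (f : (Fin n → Bool) → (Fin n → Bool))
    (hcomp : ∀ (x : Fin n → Bool) (i : Fin n), Φ.val x (Φ.out i) = f x i)
    (hsz : Φ.size ≤ s) (hMs : n + s ≤ M) :
    ∃ E : EncT n M s, decode E = f := by
  have hM : (RelSet Φ).card ≤ M := (card_RelSet_le Φ).trans (by omega)
  refine ⟨⟨⟨pmap Φ M hM hn, (sum_card_pmap Φ M hM hn).trans hsz⟩,
    (dmap Φ M hM hn, omap Φ M hM hn)⟩, ?_⟩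
  funext x k
  show decB (pmap Φ M hM hn) (dmap Φ M hM hn) x M (omap Φ M hM hn k) = f x k
  rw [← hcomp x k, omap, φmap]
  by_cases h : (Φ.out k : ℕ) < n
  · rw [dif_pos h, decB_inl]
    exact (Φ.val_input x _ h).symm
  · rw [dif_neg h]
    have hR : Φ.out k ∈ RelSet Φ := relSet_out Φ (not_lt.1 h)
    rw [dif_pos hR]
    have hjM : (((eIso Φ).symm ⟨Φ.out k, hR⟩ : Fin (RelSet Φ).card) : ℕ) < M :=
      lt_of_lt_of_le ((eIso Φ).symm ⟨Φ.out k, hR⟩).2 hM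
    rw [decB_correct Φ M hM hn x M _ hjM, OrderIso.apply_symm_apply]

lemma aux_pow : ∀ {k nn : ℕ}, 1 ≤ k → k ≤ nn → nn * 2 ^ k ≤ k * 2 ^ nn := by
  intro k nn hk h
  induction nn, h using Nat.le_induction with
  | base => exact le_rfl
  | succ nn h IH =>
    calc (nn + 1) * 2 ^ k = nn * 2 ^ k + 2 ^ k := by ring
      _ ≤ k * 2 ^ nn + 2 ^ nn := add_le_add IH (Nat.pow_le_pow_right (by norm_num) h)
      _ ≤ k * 2 ^ nn + k * 2 ^ nn := by
          have h2 : 2 ^ nn ≤ k * 2 ^ nn := Nat.le_mul_of_pos_left _ hk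
          omega
      _ = k * 2 ^ (nn + 1) := by ring

lemma min_pow_le (nn k : ℕ) : nn * 2 ^ min k nn ≤ 2 ^ nn * k + nn := by
  rcases le_or_gt nn k with h | h
  · rw [min_eq_right h]
    have : nn * 2 ^ nn ≤ k * 2 ^ nn := Nat.mul_le_mul_right _ h
    nlinarith [this]
  · rw [min_eq_left h.le]
    rcases Nat.eq_zero_or_pos k with rfl | hk
    · simp
    · have := aux_pow hk h.le
      nlinarith [this]

lemma card_EncT_le (n M s : ℕ) (hn : 0 < n) :
    Fintype.card (EncT n M s) ≤
      2 ^ ((n + M) * M) * (2 ^ ((2 ^ n * s + n * M) / n) * (n + M) ^ n) := by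
  classical
  have hcard : Fintype.card (EncT n M s)
      = ∑ p : {p : Fin M → Finset (Fin n ⊕ Fin M) // ∑ i, (p i).card ≤ s},
          (∏ i : Fin M, 2 ^ 2 ^ min (p.1 i).card n) * (n + M) ^ n := by
    rw [Fintype.card_sigma]
    congr 1
    funext p
    rw [Fintype.card_prod]
    congr 1
    · rw [Fintype.card_pi]
      congr 1
      funext i
      simp
    · simp
  rw [hcard]
  have hbound : ∀ p : {p : Fin M → Finset (Fin n ⊕ Fin M) // ∑ i, (p i).card ≤ s},
      (∏ i : Fin M, 2 ^ 2 ^ min (p.1 i).card n) * (n + M) ^ n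
        ≤ 2 ^ ((2 ^ n * s + n * M) / n) * (n + M) ^ n := by
    intro p
    apply Nat.mul_le_mul_right
    rw [Finset.prod_pow_eq_pow_sum]
    apply Nat.pow_le_pow_right (by norm_num)
    rw [Nat.le_div_iff_mul_le hn]
    calc (∑ i : Fin M, 2 ^ min (p.1 i).card n) * n
        = ∑ i : Fin M, n * 2 ^ min (p.1 i).card n := by
          rw [Finset.sum_mul]; congr 1; funext i; ring
      _ ≤ ∑ i : Fin M, (2 ^ n * (p.1 i).card + n) :=
          Finset.sum_le_sum (fun i _ => min_pow_le n (p.1 i).card)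
      _ = 2 ^ n * (∑ i : Fin M, (p.1 i).card) + n * M := by
          rw [Finset.sum_add_distrib, ← Finset.mul_sum]
          simp [Finset.card_univ, mul_comm]
      _ ≤ 2 ^ n * s + n * M := by
          have := p.2
          apply Nat.add_le_add_right
          exact Nat.mul_le_mul_left _ this
  calc ∑ p : {p : Fin M → Finset (Fin n ⊕ Fin M) // ∑ i, (p i).card ≤ s},
        (∏ i : Fin M, 2 ^ 2 ^ min (p.1 i).card n) * (n + M) ^ n
      ≤ ∑ _p : {p : Fin M → Finset (Fin n ⊕ Fin M) // ∑ i, (p i).card ≤ s},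
        2 ^ ((2 ^ n * s + n * M) / n) * (n + M) ^ n := Finset.sum_le_sum (fun p _ => hbound p)
    _ = Fintype.card {p : Fin M → Finset (Fin n ⊕ Fin M) // ∑ i, (p i).card ≤ s}
        * (2 ^ ((2 ^ n * s + n * M) / n) * (n + M) ^ n) := by
        rw [Finset.sum_const, Finset.card_univ, smul_eq_mul]
    _ ≤ 2 ^ ((n + M) * M) * (2 ^ ((2 ^ n * s + n * M) / n) * (n + M) ^ n) := by
        apply Nat.mul_le_mul_right
        calc Fintype.card {p : Fin M → Finset (Fin n ⊕ Fin M) // ∑ i, (p i).card ≤ s}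
            ≤ Fintype.card (Fin M → Finset (Fin n ⊕ Fin M)) := Fintype.card_subtype_le _
          _ = 2 ^ ((n + M) * M) := by
              rw [Fintype.card_fun]
              simp [Fintype.card_finset, ← pow_mul]

lemma cube_le : ∀ n : ℕ, 20 ≤ n → 64 * n ^ 3 ≤ 2 ^ n := by
  intro n hn
  induction n, hn using Nat.le_induction with
  | base => norm_num
  | succ n h IH =>
    have hh : 20 * n ^ 2 ≤ n ^ 3 := by
      calc 20 * n ^ 2 ≤ n * n ^ 2 := Nat.mul_le_mul_right _ h
        _ = n ^ 3 := by ring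
    have h1 : 64 * (n + 1) ^ 3 ≤ 2 * (64 * n ^ 3) := by nlinarith [hh, h]
    calc 64 * (n + 1) ^ 3 ≤ 2 * (64 * n ^ 3) := h1
      _ ≤ 2 * 2 ^ n := by omega
      _ = 2 ^ (n + 1) := by ring

lemma exp_le (n s M : ℕ) (hn : 20 ≤ n) (h8 : 8 * s ≤ n ^ 2) (hM : M = n + s) :
    (n + M) * M + (2 ^ n * s + n * M) / n + (n + M) * n + 2 ^ (n - 1) ≤ n * 2 ^ n := by
  subst hM
  set P := 2 ^ n with hP
  set Q := 2 ^ (n - 1) with hQ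
  set B := (P * s + n * (n + s)) / n with hB
  have hPQ : 2 * Q = P := by
    rw [hP, hQ, ← pow_succ']
    congr 1
    omega
  have hc : 64 * n ^ 3 ≤ P := cube_le n hn
  have hBn : n * B ≤ P * s + n * (n + s) := by
    rw [mul_comm]
    exact Nat.div_mul_le_self _ _
  have hn0 : 0 < n := by omega
  refine Nat.le_of_mul_le_mul_left ?_ hn0
  calc n * ((n + (n + s)) * (n + s) + B + (n + (n + s)) * n + Q)
      = n * ((n + (n + s)) * (n + s)) + n * B + n * ((n + (n + s)) * n) + n * Q := by ring
    _ ≤ n * ((n + (n + s)) * (n + s)) + (P * s + n * (n + s))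
          + n * ((n + (n + s)) * n) + n * Q := by gcongr
    _ ≤ n * (n * P) := by
        have e1 : 8 * (P * s) ≤ P * n ^ 2 := by
          calc 8 * (P * s) = P * (8 * s) := by ring
            _ ≤ P * n ^ 2 := Nat.mul_le_mul_left _ h8
        have e2 : 64 * n ^ 3 * n ^ 2 ≤ P * n ^ 2 := Nat.mul_le_mul_right _ hc
        have e3 : 8 * (n * s) ≤ n * n ^ 2 := by
          calc 8 * (n * s) = n * (8 * s) := by ring
            _ ≤ n * n ^ 2 := Nat.mul_le_mul_left _ h8
        have e4 : 8 * (n ^ 2 * s) ≤ n ^ 2 * n ^ 2 := by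
          calc 8 * (n ^ 2 * s) = n ^ 2 * (8 * s) := by ring
            _ ≤ n ^ 2 * n ^ 2 := Nat.mul_le_mul_left _ h8
        have e5 : (8 * s) * (8 * s) ≤ n ^ 2 * n ^ 2 := Nat.mul_le_mul h8 h8
        have e6 : 8 * (n * (s * s)) ≤ n * (n ^ 2 * s) := by
          calc 8 * (n * (s * s)) = n * ((8 * s) * s) := by ring
            _ ≤ n * (n ^ 2 * s) := Nat.mul_le_mul_left _ (Nat.mul_le_mul_right _ h8)
        have e7 : n * (2 * Q) = n * P := by rw [hPQ]
        have e9 : 4 * n ≤ n ^ 2 := by nlinarith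
        have e8 : 4 * (n * P) ≤ n ^ 2 * P := by
          calc 4 * (n * P) = (4 * n) * P := by ring
            _ ≤ n ^ 2 * P := Nat.mul_le_mul_right _ e9
        nlinarith [e1, e2, e3, e4, e5, e6, e7, e8, hn, hc]

end ShannonGC

/-- Almost all `n`-operators require more than `c·n²` wires: the number of `n`-operators
computable with at most `c·n²` wires is at most `2^(n·2^n) / 2^(2^(n-1))`. -/
theorem card_operators_computable_with_quadratic_wires_le :
    ∃ c : ℝ, c > 0 ∧ ∃ N : ℕ, ∀ n ≥ N,
      Nat.card {f : (Fin n → Bool) → (Fin n → Bool) //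
          ∃ (m : ℕ) (Φ : GenCircuit n m), Φ.Computes f ∧ (Φ.size : ℝ) ≤ c * (n : ℝ) ^ 2}
        ≤ 2 ^ (n * 2 ^ n) / 2 ^ (2 ^ (n - 1)) := by
  classical
  refine ⟨1/8, by norm_num, 20, ?_⟩
  intro n hn
  have hn0 : 0 < n := by omega
  set s := n ^ 2 / 8 with hs
  set M := n + s with hM
  have key : ∀ F : {f : (Fin n → Bool) → (Fin n → Bool) //
      ∃ (m : ℕ) (Φ : GenCircuit n m), Φ.Computes f ∧ (Φ.size : ℝ) ≤ 1/8 * (n : ℝ) ^ 2},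
      ∃ E : ShannonGC.EncT n M s, ShannonGC.decode E = F.1 := by
    rintro ⟨f, m, Φ, hcomp, hsz⟩
    refine ShannonGC.exists_enc hn0 Φ f hcomp ?_ le_rfl
    have h8 : 8 * (Φ.size : ℝ) ≤ (n : ℝ) ^ 2 := by linarith
    have h8n : 8 * Φ.size ≤ n ^ 2 := by exact_mod_cast h8
    rw [hs, Nat.le_div_iff_mul_le (by norm_num)]
    omega
  choose g hg using key
  have hinj : Function.Injective g := by
    intro a b hab
    apply Subtype.ext
    rw [← hg a, ← hg b, hab]
  have h8s : 8 * s ≤ n ^ 2 := by rw [hs]; omega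
  have hexp := ShannonGC.exp_le n s M hn h8s hM
  have hle1 : 2 ^ (n - 1) ≤ n * 2 ^ n := by
    calc 2 ^ (n - 1) ≤ 2 ^ n := Nat.pow_le_pow_right (by norm_num) (by omega)
      _ ≤ n * 2 ^ n := Nat.le_mul_of_pos_left _ hn0
  calc Nat.card {f : (Fin n → Bool) → (Fin n → Bool) //
          ∃ (m : ℕ) (Φ : GenCircuit n m), Φ.Computes f ∧ (Φ.size : ℝ) ≤ 1/8 * (n : ℝ) ^ 2}
      ≤ Nat.card (ShannonGC.EncT n M s) := Nat.card_le_card_of_injective g hinj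
    _ = Fintype.card (ShannonGC.EncT n M s) := Nat.card_eq_fintype_card
    _ ≤ 2 ^ ((n + M) * M) * (2 ^ ((2 ^ n * s + n * M) / n) * (n + M) ^ n) :=
        ShannonGC.card_EncT_le n M s hn0
    _ ≤ 2 ^ ((n + M) * M) * (2 ^ ((2 ^ n * s + n * M) / n) * 2 ^ ((n + M) * n)) := by
        refine Nat.mul_le_mul_left _ (Nat.mul_le_mul_left _ ?_)
        calc (n + M) ^ n ≤ (2 ^ (n + M)) ^ n := Nat.pow_le_pow_left (Nat.lt_two_pow_self (n := n + M)).le n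
          _ = 2 ^ ((n + M) * n) := by rw [← pow_mul]
    _ = 2 ^ ((n + M) * M + ((2 ^ n * s + n * M) / n + (n + M) * n)) := by
        rw [pow_add, pow_add]
    _ ≤ 2 ^ (n * 2 ^ n - 2 ^ (n - 1)) := by
        apply Nat.pow_le_pow_right (by norm_num)
        exact Nat.le_sub_of_add_le (by linarith [hexp])
    _ = 2 ^ (n * 2 ^ n) / 2 ^ (2 ^ (n - 1)) := (Nat.pow_div hle1 (by norm_num)).symm
end

section
/- Let n, r : ℕ, A : Matrix (Fin n) (Fin n) (ZMod 2), C : Matrix (Fin n) (Fin r) (ZMod 2), c : Fin n → ZMod 2, S : Fin r → Finset (Fin n), and h : (Fin n → ZMod 2) → (Fin r → ZMod 2) be such that for each j : Fin r the function x ↦ h x j depends only on S j, and A.mulVec x = C.mulVec (h x) + c for all x : Fin n → ZMod 2. Then there exists a matrix B : Matrix (Fin r) (Fin n) (ZMod 2) such that A.mulVec x = C.mulVec (B.mulVec x) for all x, and for every j : Fin r the number of nonzero entries in row j of B is at most (S j).card. (Thus a depth-2 circuit with arbitrary middle gates and linear output gates computing a linear operator can be replaced by an entirely linear circuit with no more wires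 on either level.) -/
open Matrix

/-- `g` depends only on the coordinates in `T`. -/
def DependsOnlyOn {k : ℕ} (g : (Fin k → ZMod 2) → ZMod 2) (T : Finset (Fin k)) : Prop :=
  ∀ u v : Fin k → ZMod 2, (∀ i ∈ T, u i = v i) → g u = g v

/-- The number of nonzero entries of a matrix. -/
def nnz {α β : Type*} [Fintype α] [Fintype β] (M : Matrix α β (ZMod 2)) : ℕ :=
  (Finset.univ.filter (fun p : α × β => M p.1 p.2 ≠ 0)).card

/-- A depth-2 circuit with arbitrary middle gates and linear output gates computing a
linear operator can be replaced by an entirely linear circuit with no more wires. -/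
theorem linearize_middle_layer (n r : ℕ) (A : Matrix (Fin n) (Fin n) (ZMod 2))
    (C : Matrix (Fin n) (Fin r) (ZMod 2)) (c : Fin n → ZMod 2)
    (S : Fin r → Finset (Fin n)) (h : (Fin n → ZMod 2) → (Fin r → ZMod 2))
    (hdep : ∀ j : Fin r, DependsOnlyOn (fun x => h x j) (S j))
    (hcomp : ∀ x : Fin n → ZMod 2, A.mulVec x = C.mulVec (h x) + c) :
    ∃ B : Matrix (Fin r) (Fin n) (ZMod 2),
      (∀ x : Fin n → ZMod 2, A.mulVec x = C.mulVec (B.mulVec x)) ∧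
      ∀ j : Fin r, (Finset.univ.filter (fun i : Fin n => B j i ≠ 0)).card ≤ (S j).card := by
  set B : Matrix (Fin r) (Fin n) (ZMod 2) :=
    fun j i => h (Pi.single i 1) j + h 0 j with hB
  have hc : C.mulVec (h 0) = c := by
    have h0 := hcomp 0
    rw [Matrix.mulVec_zero] at h0
    funext k
    have hk : C.mulVec (h 0) k + c k = 0 := (congrFun h0 k).symm
    rw [add_eq_zero_iff_eq_neg, CharTwo.neg_eq] at hk
    exact hk
  have key : ∀ x : Fin n → ZMod 2,
      C.mulVec (fun j => h x j + h 0 j) = A.mulVec x := by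
    intro x
    have : (fun j => h x j + h 0 j) = h x + h 0 := rfl
    rw [this, Matrix.mulVec_add, hc, hcomp x]
  have hCB : C * B = A := by
    ext k i
    have := congrFun (key (Pi.single i 1)) k
    simp only [Matrix.mulVec_single, mul_one, MulOpposite.op_one, one_smul, Pi.smul_apply, Matrix.col_apply] at this
    rw [Matrix.mul_apply]
    rw [← this]
    simp [Matrix.mulVec, dotProduct, hB]
  refine ⟨B, fun x => ?_, fun j => ?_⟩
  · rw [Matrix.mulVec_mulVec, hCB]
  · apply Finset.card_le_card
    intro i hi
    simp only [Finset.mem_filter, Finset.mem_univ, true_and] at hi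
    by_contra hiS
    apply hi
    have := hdep j (Pi.single i 1) 0 (fun i' hi' => by
      rw [Pi.single_apply]
      simp only [Pi.zero_apply]
      rw [if_neg]
      intro he
      exact hiS (he ▸ hi'))
    simp only [hB, this]
    exact CharTwo.add_self_eq_zero _
end

section
/- There is a constant c > 0 and N : ℕ such that for every n ≥ N there exists a matrix A : Matrix (Fin n) (Fin n) (ZMod 2) such that every depth-2 circuit with linear middle gates computing the linear operator x ↦ A.mulVec x has at least c * n^2 / Real.logb 2 n wires. -/
open Matrix

/-! ### Auxiliary lemmas -/

lemma span_step {n r : ℕ} (A : Matrix (Fin n) (Fin n) (ZMod 2)) (B : Matrix (Fin r) (Fin n) (ZMod 2))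
    (T : Finset (Fin r)) (g : (Fin r → ZMod 2) → ZMod 2)
    (hg : ∀ u v : Fin r → ZMod 2, (∀ j ∈ T, u j = v j) → g u = g v)
    (i : Fin n)
    (hc : ∀ x : Fin n → ZMod 2, g (B.mulVec x) = A.mulVec x i) :
    ∃ c : Fin r → ZMod 2, (∀ j, j ∉ T → c j = 0) ∧ A i = ∑ j, c j • B j := by
  have hmem : A i ∈ Submodule.span (ZMod 2) (Set.range (fun j : T => B j)) := by
    by_contra hA
    obtain ⟨f, hf1, hf2⟩ := Submodule.exists_dual_map_eq_bot_of_notMem hA inferInstance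
    have hfz : ∀ y, y ∈ Submodule.span (ZMod 2) (Set.range (fun j : T => B j)) → f y = 0 := by
      intro y hy
      have : f y ∈ Submodule.map f (Submodule.span (ZMod 2) (Set.range (fun j : T => B j))) :=
        Submodule.mem_map_of_mem hy
      rw [hf2] at this
      simpa using this
    set x : Fin n → ZMod 2 := fun k => f (fun k' => if k = k' then 1 else 0) with hx
    have hfy : ∀ y : Fin n → ZMod 2, f y = dotProduct y x := by
      intro y
      rw [LinearMap.pi_apply_eq_sum_univ f y, dotProduct]
      simp [hx, smul_eq_mul]
    have hBj : ∀ j ∈ T, B.mulVec x j = 0 := by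
      intro j hj
      have hBT : f (B j) = 0 :=
        hfz _ (Submodule.subset_span ⟨⟨j, hj⟩, rfl⟩)
      rw [hfy] at hBT
      simpa [Matrix.mulVec, dotProduct] using hBT
    have h0 : A.mulVec x i = A.mulVec 0 i := by
      rw [← hc, ← hc]
      apply hg
      intro j hj
      rw [hBj j hj]
      simp [Matrix.mulVec_zero]
    have h1 : A.mulVec x i = f (A i) := by
      rw [hfy]
      simp [Matrix.mulVec, dotProduct]
    rw [h1, Matrix.mulVec_zero] at h0
    exact hf1 (by simpa using h0)
  rw [Submodule.mem_span_range_iff_exists_fun] at hmem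
  obtain ⟨c₀, hc₀⟩ := hmem
  refine ⟨fun j => if h : j ∈ T then c₀ ⟨j, h⟩ else 0, fun j hj => by simp [hj], ?_⟩
  rw [← hc₀]
  rw [← Finset.sum_subset (Finset.subset_univ T)
      (fun j _ hj => by simp [hj] : ∀ j ∈ Finset.univ, j ∉ T →
        (if h : j ∈ T then c₀ ⟨j, h⟩ else 0) • B j = 0)]
  rw [← Finset.sum_attach T (fun j => (if h : j ∈ T then c₀ ⟨j, h⟩ else 0) • B j)]
  exact Finset.sum_congr rfl (fun j _ => by simp [j.2])

lemma nnz_rows {α β : Type*} [Fintype α] [Fintype β] [DecidableEq α] (M : Matrix α β (ZMod 2)) :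
    nnz M = ∑ a : α, (Finset.univ.filter (fun b => M a b ≠ 0)).card := by
  rw [nnz, Finset.card_eq_sum_card_fiberwise
    (f := Prod.fst) (t := Finset.univ) (fun p _ => Finset.mem_univ _)]
  refine Finset.sum_congr rfl (fun a _ => ?_)
  refine Finset.card_bij' (fun p _ => p.2) (fun b _ => (a, b)) ?_ ?_ ?_ ?_ <;>
    simp +contextual [eq_comm]

lemma sum_pad {M : Type*} [AddCommMonoid M] {K m : ℕ} (hK : K ≤ m) (G : Fin K → M) :
    ∑ p : Fin m, (if h : (p : ℕ) < K then G ⟨p, h⟩ else 0) = ∑ q : Fin K, G q := by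
  have h1 : ∀ q : Fin K, G q = (fun x : ℕ => if h : x < K then G ⟨x, h⟩ else 0) q := by
    intro q; simp
  rw [Fin.sum_univ_eq_sum_range (fun x => if h : x < K then G ⟨x, h⟩ else 0) m]
  rw [← Finset.sum_subset (Finset.range_subset_range.2 hK)
    (fun x _ hx => dif_neg (by simpa using hx))]
  rw [← Fin.sum_univ_eq_sum_range (fun x => if h : x < K then G ⟨x, h⟩ else 0) K]
  exact Finset.sum_congr rfl (fun q _ => (h1 q).symm)

lemma sum_equivFin {r : ℕ} {γ : Type*} [AddCommMonoid γ] (U : Finset (Fin r)) (G : Fin r → γ) :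
    ∑ q : Fin U.card, G (U.equivFin.symm q) = ∑ j ∈ U, G j := by
  rw [← Finset.sum_coe_sort U G]
  exact Equiv.sum_comp U.equivFin.symm (fun j : U => G j)

lemma exists_factorization {n r m : ℕ} (A : Matrix (Fin n) (Fin n) (ZMod 2))
    (B : Matrix (Fin r) (Fin n) (ZMod 2)) (T : Fin n → Finset (Fin r))
    (c : Fin n → Fin r → ZMod 2)
    (hc0 : ∀ i j, j ∉ T i → c i j = 0)
    (hA : ∀ i, A i = ∑ j, c i j • B j)
    (hW : nnz B + ∑ i, (T i).card ≤ m) :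
    ∃ (C : Matrix (Fin n) (Fin m) (ZMod 2)) (B' : Matrix (Fin m) (Fin n) (ZMod 2)),
      C * B' = A ∧ nnz C + nnz B' ≤ m := by
  classical
  set U : Finset (Fin r) := Finset.univ.filter (fun j => B j ≠ 0) with hU
  set K := U.card with hKdef
  set e : Fin K → Fin r := fun q => (U.equivFin.symm q : Fin r) with he
  have hBU : ∀ j, j ∉ U → B j = 0 := by
    intro j hj; by_contra h; exact hj (Finset.mem_filter.2 ⟨Finset.mem_univ _, h⟩)
  have hKB : K ≤ nnz B := by
    rw [nnz_rows]
    calc K = ∑ j ∈ U, 1 := by simp [hKdef]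
    _ ≤ ∑ j ∈ U, (Finset.univ.filter (fun k => B j k ≠ 0)).card := by
        refine Finset.sum_le_sum (fun j hj => ?_)
        have : B j ≠ 0 := (Finset.mem_filter.1 hj).2
        obtain ⟨k, hk⟩ := Function.ne_iff.1 this
        exact Finset.card_pos.2 ⟨k, by simpa using hk⟩
    _ ≤ ∑ j : Fin r, (Finset.univ.filter (fun k => B j k ≠ 0)).card :=
        Finset.sum_le_sum_of_subset (Finset.subset_univ U)
  have hKm : K ≤ m := le_trans hKB (le_trans (Nat.le_add_right _ _) hW)
  set C : Matrix (Fin n) (Fin m) (ZMod 2) :=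
    fun i p => if h : (p : ℕ) < K then c i (e ⟨p, h⟩) else 0 with hC
  set B' : Matrix (Fin m) (Fin n) (ZMod 2) :=
    fun p k => if h : (p : ℕ) < K then B (e ⟨p, h⟩) k else 0 with hB'
  refine ⟨C, B', ?_, ?_⟩
  · ext i k
    rw [Matrix.mul_apply]
    have h1 : ∀ p : Fin m, C i p * B' p k =
        (if h : (p : ℕ) < K then c i (e ⟨p, h⟩) * B (e ⟨p, h⟩) k else 0) := by
      intro p; by_cases h : (p : ℕ) < K <;> simp [hC, hB', h]
    rw [Finset.sum_congr rfl (fun p _ => h1 p)]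
    rw [sum_pad hKm (fun q => c i (e q) * B (e q) k)]
    rw [sum_equivFin U (fun j => c i j * B j k)]
    rw [Finset.sum_subset (Finset.subset_univ U)
      (fun j _ hj => by rw [show B j = 0 from hBU j hj]; simp)]
    have := congrFun (hA i) k
    rw [this, Finset.sum_apply]
    exact Finset.sum_congr rfl (fun j _ => by simp [smul_eq_mul])
  · have hnnzB' : nnz B' ≤ nnz B := by
      rw [nnz_rows, nnz_rows]
      have h1 : ∀ p : Fin m, (Finset.univ.filter (fun k => B' p k ≠ 0)).card =
          (if h : (p : ℕ) < K then (Finset.univ.filter (fun k => B (e ⟨p, h⟩) k ≠ 0)).card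
           else 0) := by
        intro p; by_cases h : (p : ℕ) < K <;> simp [hB', h]
      rw [Finset.sum_congr rfl (fun p _ => h1 p)]
      rw [sum_pad hKm (fun q => (Finset.univ.filter (fun k => B (e q) k ≠ 0)).card)]
      rw [sum_equivFin U (fun j => (Finset.univ.filter (fun k => B j k ≠ 0)).card)]
      exact Finset.sum_le_sum_of_subset (Finset.subset_univ U)
    have hnnzC : nnz C ≤ ∑ i, (T i).card := by
      rw [nnz_rows]
      refine Finset.sum_le_sum (fun i _ => ?_)
      have h1 : (Finset.univ.filter (fun p => C i p ≠ 0)).card =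
          ∑ p : Fin m, (if h : (p : ℕ) < K then (if c i (e ⟨p, h⟩) ≠ 0 then 1 else 0) else 0) := by
        rw [Finset.card_filter]
        exact Finset.sum_congr rfl (fun p _ => by by_cases h : (p : ℕ) < K <;> simp [hC, h])
      rw [h1, sum_pad hKm (fun q => if c i (e q) ≠ 0 then 1 else 0),
        sum_equivFin U (fun j => if c i j ≠ 0 then 1 else 0)]
      calc ∑ j ∈ U, (if c i j ≠ 0 then 1 else 0)
          ≤ ∑ j : Fin r, (if c i j ≠ 0 then 1 else 0) :=
            Finset.sum_le_sum_of_subset (Finset.subset_univ U)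
        _ = (Finset.univ.filter (fun j => c i j ≠ 0)).card := (Finset.card_filter _ _).symm
        _ ≤ (T i).card := Finset.card_le_card (fun j hj => by
            by_contra h
            exact (Finset.mem_filter.1 hj).2 (hc0 i j h))
    omega

lemma zmod2_eq {x y : ZMod 2} (h : x ≠ 0 ↔ y ≠ 0) : x = y := by
  have : ∀ a b : ZMod 2, ((a ≠ 0 ↔ b ≠ 0) → a = b) := by decide
  exact this x y h

lemma count_le (n m : ℕ) :
    (Finset.univ.filter (fun A : Matrix (Fin n) (Fin n) (ZMod 2) =>
      ∃ (C : Matrix (Fin n) (Fin m) (ZMod 2)) (B' : Matrix (Fin m) (Fin n) (ZMod 2)),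
        C * B' = A ∧ nnz C + nnz B' ≤ m)).card ≤ (m + 1) * (n * m + m * n + 1) ^ m := by
  classical
  set PF : Finset (Matrix (Fin n) (Fin m) (ZMod 2) × Matrix (Fin m) (Fin n) (ZMod 2)) :=
    Finset.univ.filter (fun q => nnz q.1 + nnz q.2 ≤ m) with hPF
  have h1 : (Finset.univ.filter (fun A : Matrix (Fin n) (Fin n) (ZMod 2) =>
      ∃ (C : Matrix (Fin n) (Fin m) (ZMod 2)) (B' : Matrix (Fin m) (Fin n) (ZMod 2)),
        C * B' = A ∧ nnz C + nnz B' ≤ m)) ⊆ PF.image (fun q => q.1 * q.2) := by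
    intro A hA
    obtain ⟨C, B', hCB, hle⟩ := (Finset.mem_filter.1 hA).2
    exact Finset.mem_image.2 ⟨(C, B'), Finset.mem_filter.2 ⟨Finset.mem_univ _, hle⟩, hCB⟩
  refine le_trans (Finset.card_le_card h1) (le_trans Finset.card_image_le ?_)
  set supp : (Matrix (Fin n) (Fin m) (ZMod 2) × Matrix (Fin m) (Fin n) (ZMod 2)) →
      Finset ((Fin n × Fin m) ⊕ (Fin m × Fin n)) :=
    fun q => (Finset.univ.filter (fun p : Fin n × Fin m => q.1 p.1 p.2 ≠ 0)).disjSum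
      (Finset.univ.filter (fun p : Fin m × Fin n => q.2 p.1 p.2 ≠ 0)) with hsupp
  have hinj : Function.Injective supp := by
    intro q q' h
    have hL := congrArg Finset.toLeft h
    have hR := congrArg Finset.toRight h
    simp only [hsupp, Finset.toLeft_disjSum, Finset.toRight_disjSum] at hL hR
    have e1 : q.1 = q'.1 := by
      ext a b
      refine zmod2_eq ?_
      constructor <;> intro hx
      · have := hL ▸ (Finset.mem_filter.2 ⟨Finset.mem_univ ((a, b) : Fin n × Fin m), hx⟩)
        exact (Finset.mem_filter.1 this).2
      · have := hL.symm ▸ (Finset.mem_filter.2 ⟨Finset.mem_univ ((a, b) : Fin n × Fin m), hx⟩)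
        exact (Finset.mem_filter.1 this).2
    have e2 : q.2 = q'.2 := by
      ext a b
      refine zmod2_eq ?_
      constructor <;> intro hx
      · have := hR ▸ (Finset.mem_filter.2 ⟨Finset.mem_univ ((a, b) : Fin m × Fin n), hx⟩)
        exact (Finset.mem_filter.1 this).2
      · have := hR.symm ▸ (Finset.mem_filter.2 ⟨Finset.mem_univ ((a, b) : Fin m × Fin n), hx⟩)
        exact (Finset.mem_filter.1 this).2
    exact Prod.ext e1 e2
  rw [← Finset.card_image_of_injective PF hinj]
  have h2 : PF.image supp ⊆ Finset.univ.filter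
      (fun s : Finset ((Fin n × Fin m) ⊕ (Fin m × Fin n)) => s.card ≤ m) := by
    intro s hs
    obtain ⟨q, hq, rfl⟩ := Finset.mem_image.1 hs
    refine Finset.mem_filter.2 ⟨Finset.mem_univ _, ?_⟩
    rw [hsupp]
    simpa [Finset.card_disjSum, nnz] using (Finset.mem_filter.1 hq).2
  refine le_trans (Finset.card_le_card h2) ?_
  have h3 : Finset.univ.filter
      (fun s : Finset ((Fin n × Fin m) ⊕ (Fin m × Fin n)) => s.card ≤ m) ⊆
      (Finset.range (m + 1)).biUnion
        (fun k => Finset.powersetCard k Finset.univ) := by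
    intro s hs
    refine Finset.mem_biUnion.2 ⟨s.card, Finset.mem_range.2
      (Nat.lt_succ_of_le (Finset.mem_filter.1 hs).2), ?_⟩
    exact Finset.mem_powersetCard.2 ⟨Finset.subset_univ _, rfl⟩
  refine le_trans (Finset.card_le_card h3) (le_trans (Finset.card_biUnion_le) ?_)
  have hD : Fintype.card ((Fin n × Fin m) ⊕ (Fin m × Fin n)) = n * m + m * n := by simp
  calc ∑ k ∈ Finset.range (m + 1), (Finset.powersetCard k
        (Finset.univ : Finset ((Fin n × Fin m) ⊕ (Fin m × Fin n)))).card
      = ∑ k ∈ Finset.range (m + 1), (n * m + m * n).choose k := by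
        refine Finset.sum_congr rfl (fun k _ => ?_)
        rw [Finset.card_powersetCard, Finset.card_univ, hD]
    _ ≤ ∑ k ∈ Finset.range (m + 1), (n * m + m * n + 1) ^ m := by
        refine Finset.sum_le_sum (fun k hk => ?_)
        refine le_trans (Nat.choose_le_pow _ _) ?_
        refine le_trans (Nat.pow_le_pow_left (Nat.le_succ _) k) ?_
        exact Nat.pow_le_pow_right (Nat.succ_le_succ (Nat.zero_le _))
          (Nat.lt_succ_iff.1 (Finset.mem_range.1 hk))
    _ = (m + 1) * (n * m + m * n + 1) ^ m := by
        rw [Finset.sum_const, Finset.card_range, smul_eq_mul]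

lemma exists_hard (n m : ℕ)
    (h : (m + 1) * (n * m + m * n + 1) ^ m < 2 ^ (n * n)) :
    ∃ A : Matrix (Fin n) (Fin n) (ZMod 2),
      ¬ ∃ (C : Matrix (Fin n) (Fin m) (ZMod 2)) (B' : Matrix (Fin m) (Fin n) (ZMod 2)),
        C * B' = A ∧ nnz C + nnz B' ≤ m := by
  by_contra hcon
  have hall : ∀ A : Matrix (Fin n) (Fin n) (ZMod 2),
      ∃ (C : Matrix (Fin n) (Fin m) (ZMod 2)) (B' : Matrix (Fin m) (Fin n) (ZMod 2)),
        C * B' = A ∧ nnz C + nnz B' ≤ m :=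
    fun A => of_not_not (fun hA => hcon ⟨A, hA⟩)
  have hfull : (Finset.univ.filter (fun A : Matrix (Fin n) (Fin n) (ZMod 2) =>
      ∃ (C : Matrix (Fin n) (Fin m) (ZMod 2)) (B' : Matrix (Fin m) (Fin n) (ZMod 2)),
        C * B' = A ∧ nnz C + nnz B' ≤ m)) = Finset.univ :=
    Finset.filter_true_of_mem (fun A _ => hall A)
  have hcount := count_le n m
  rw [hfull, Finset.card_univ] at hcount
  have hcard : Fintype.card (Matrix (Fin n) (Fin n) (ZMod 2)) = 2 ^ (n * n) := by
    rw [Fintype.card_congr (α := Matrix (Fin n) (Fin n) (ZMod 2)) (β := Fin n → Fin n → ZMod 2) (Equiv.refl _)]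
    simp [pow_mul]
  rw [hcard] at hcount
  omega

lemma arith (n : ℕ) (hn : 16 ≤ n) :
    (n * n / (8 * Nat.log 2 n) + 1) *
      (n * (n * n / (8 * Nat.log 2 n)) + (n * n / (8 * Nat.log 2 n)) * n + 1)
        ^ (n * n / (8 * Nat.log 2 n)) < 2 ^ (n * n) := by
  set L := Nat.log 2 n with hL
  set m := n * n / (8 * L) with hm
  have hL4 : 4 ≤ L :=
    (Nat.le_log_iff_pow_le one_lt_two (by omega)).2 (by norm_num; omega)
  have hn1 : 1 ≤ n := by omega
  have hnpow : n ^ 3 ≤ 2 ^ (3 * L + 3) := by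
    have h1 : n < 2 ^ (L + 1) := Nat.lt_pow_succ_log_self (by norm_num) n
    calc n ^ 3 ≤ (2 ^ (L + 1)) ^ 3 := Nat.pow_le_pow_left (le_of_lt h1) 3
    _ = 2 ^ (3 * L + 3) := by rw [← pow_mul]; ring_nf
  have hmn : m ≤ n * n := Nat.div_le_self _ _
  have hbase : n * m + m * n + 1 ≤ 2 ^ (3 * L + 5) := by
    have h2 : n * m + m * n + 1 ≤ 4 * n ^ 3 := by
      have : n * m ≤ n * (n * n) := Nat.mul_le_mul_left n hmn
      have h3 : 1 ≤ n ^ 3 := Nat.one_le_pow _ _ (by omega)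
      nlinarith [Nat.mul_le_mul hmn (le_refl n)]
    calc n * m + m * n + 1 ≤ 4 * n ^ 3 := h2
    _ ≤ 4 * 2 ^ (3 * L + 3) := by omega
    _ = 2 ^ (3 * L + 5) := by ring
  have hm1 : m + 1 ≤ 2 ^ m := Nat.lt_two_pow_self
  have hmain : (m + 1) * (n * m + m * n + 1) ^ m ≤ 2 ^ ((3 * L + 6) * m) := by
    calc (m + 1) * (n * m + m * n + 1) ^ m ≤ 2 ^ m * (2 ^ (3 * L + 5)) ^ m :=
      Nat.mul_le_mul hm1 (Nat.pow_le_pow_left hbase m)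
    _ = 2 ^ ((3 * L + 6) * m) := by rw [← pow_mul, ← pow_add]; ring_nf
  refine lt_of_le_of_lt hmain ?_
  refine Nat.pow_lt_pow_right one_lt_two ?_
  rcases Nat.eq_zero_or_pos m with h0 | h0
  · rw [h0]; nlinarith
  · have h8 : m * (8 * L) ≤ n * n := Nat.div_mul_le_self _ _
    nlinarith

lemma real_bound (n : ℕ) (hn : 16 ≤ n) :
    (1 / 16 : ℝ) * (n : ℝ) ^ 2 / Real.logb 2 n ≤ ((n * n / (8 * Nat.log 2 n) : ℕ) : ℝ) + 1 := by
  set L := Nat.log 2 n with hL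
  set m := n * n / (8 * L) with hm
  have hL4 : 4 ≤ L :=
    (Nat.le_log_iff_pow_le one_lt_two (by omega)).2 (by norm_num; omega)
  have hlogpos : (0 : ℝ) < Real.logb 2 n :=
    Real.logb_pos (by norm_num) (by exact_mod_cast by omega : (1 : ℝ) < n)
  have hlogL : (L : ℝ) ≤ Real.logb 2 n := by
    have h1 : (2 : ℕ) ^ L ≤ n := Nat.pow_log_le_self 2 (by omega)
    have h2 : ((2 : ℝ)) ^ L ≤ (n : ℝ) := by exact_mod_cast h1
    calc (L : ℝ) = Real.logb 2 ((2 : ℝ) ^ L) := by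
          rw [Real.logb_pow]; simp
    _ ≤ Real.logb 2 n := Real.logb_le_logb_of_le (by norm_num) (by positivity) h2
  have hnat : n * n < (m + 1) * (8 * L) := by
    have h2 : n * n % (8 * L) < 8 * L := Nat.mod_lt _ (by omega)
    have h1 : 8 * L * m + n * n % (8 * L) = n * n := Nat.div_add_mod (n * n) (8 * L)
    calc n * n = 8 * L * m + n * n % (8 * L) := h1.symm
    _ < 8 * L * m + 8 * L := Nat.add_lt_add_left h2 _
    _ = (m + 1) * (8 * L) := by ring
  have hLpos : (0 : ℝ) < 8 * (L : ℝ) := by positivity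
  have step1 : (1 / 16 : ℝ) * (n : ℝ) ^ 2 / Real.logb 2 n ≤ (n : ℝ) ^ 2 / (8 * L) := by
    rw [show (1 / 16 : ℝ) * (n : ℝ) ^ 2 / Real.logb 2 n
        = (n : ℝ) ^ 2 / (16 * Real.logb 2 n) by ring]
    apply div_le_div_of_nonneg_left (by positivity) hLpos
    nlinarith
  refine le_trans step1 (le_of_lt ?_)
  rw [div_lt_iff₀ hLpos]
  have : ((n : ℝ)) ^ 2 = ((n * n : ℕ) : ℝ) := by push_cast; ring
  rw [this]
  calc ((n * n : ℕ) : ℝ) < (((m + 1) * (8 * L) : ℕ) : ℝ) := by exact_mod_cast hnat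
  _ = ((m : ℝ) + 1) * (8 * L) := by push_cast; ring

/-- Some linear `n`-operators require `Ω(n²/log n)` wires in depth-2 circuits whose
middle gates are linear (parities) while output gates may be arbitrary. -/
theorem lower_bound_linear_middle_gates :
    ∃ c : ℝ, c > 0 ∧ ∃ N : ℕ, ∀ n ≥ N,
      ∃ A : Matrix (Fin n) (Fin n) (ZMod 2),
        ∀ (r : ℕ) (B : Matrix (Fin r) (Fin n) (ZMod 2))
          (T : Fin n → Finset (Fin r)) (g : Fin n → ((Fin r → ZMod 2) → ZMod 2)),
          (∀ i : Fin n, DependsOnlyOn (g i) (T i)) →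
          (∀ (x : Fin n → ZMod 2) (i : Fin n), g i (B.mulVec x) = A.mulVec x i) →
          c * (n : ℝ) ^ 2 / Real.logb 2 n ≤ (nnz B + ∑ i : Fin n, (T i).card : ℕ) := by
  refine ⟨1 / 16, by norm_num, 16, fun n hn => ?_⟩
  obtain ⟨A, hA⟩ := exists_hard n (n * n / (8 * Nat.log 2 n)) (arith n hn)
  refine ⟨A, fun r B T g hg hcomp => ?_⟩
  have hspan : ∀ i : Fin n, ∃ c : Fin r → ZMod 2,
      (∀ j, j ∉ T i → c j = 0) ∧ A i = ∑ j, c j • B j :=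
    fun i => span_step A B (T i) (g i) (hg i) i (fun x => hcomp x i)
  choose c hc0 hcA using hspan
  by_contra hcon
  have hlt : ((nnz B + ∑ i : Fin n, (T i).card : ℕ) : ℝ)
      < ((n * n / (8 * Nat.log 2 n) : ℕ) : ℝ) + 1 :=
    lt_of_lt_of_le (not_le.1 hcon) (real_bound n hn)
  have hle : nnz B + ∑ i : Fin n, (T i).card ≤ n * n / (8 * Nat.log 2 n) := by
    rw [show ((n * n / (8 * Nat.log 2 n) : ℕ) : ℝ) + 1
        = (((n * n / (8 * Nat.log 2 n) + 1 : ℕ)) : ℝ) by push_cast; ring] at hlt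
    exact Nat.lt_succ_iff.1 (by exact_mod_cast hlt)
  obtain ⟨C, B', hfac, hsz⟩ := exists_factorization A B T c hc0 hcA hle
  exact hA ⟨C, B', hfac, hsz⟩
end

section
/- There is a constant c > 0 and N : ℕ such that for every n ≥ N there exists a matrix A : Matrix (Fin n) (Fin n) (ZMod 2) with the following property: for every r : ℕ and all matrices B : Matrix (Fin r) (Fin n) (ZMod 2), C : Matrix (Fin n) (Fin r) (ZMod 2), D : Matrix (Fin n) (Fin n) (ZMod 2) with A = C * B + D, one has |B| + |C| + |D| ≥ c * n^2 / Real.logb 2 n, where |M| denotes the number of nonzero entries of M. (Equivalently: some linear n-operator requires Ω(n²/log n) wires in any depth-2 circuit all of whose gates are parities, where D records the direct input–output wires.) -/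
open Matrix

namespace LBHelper

open Finset

def supp {α β : Type*} [Fintype α] [Fintype β] (M : Matrix α β (ZMod 2)) : Finset (α × β) :=
  Finset.univ.filter (fun p : α × β => M p.1 p.2 ≠ 0)

lemma nnz_eq_card_supp {α β : Type*} [Fintype α] [Fintype β] (M : Matrix α β (ZMod 2)) :
    nnz M = (supp M).card := rfl

lemma eq_of_supp_eq {α β : Type*} [Fintype α] [Fintype β] {M N : Matrix α β (ZMod 2)}
    (h : supp M = supp N) : M = N := by
  ext i j
  have h2 := Finset.ext_iff.mp h (i, j)
  simp only [supp, Finset.mem_filter, Finset.mem_univ, true_and] at h2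
  have hM : ∀ x : ZMod 2, x = 0 ∨ x = 1 := by decide
  rcases hM (M i j) with h'|h' <;> rcases hM (N i j) with h''|h'' <;> simp_all

lemma disjSum_inj {α β : Type*} [DecidableEq α] [DecidableEq β]
    {s₁ s₂ : Finset α} {t₁ t₂ : Finset β} (h : s₁.disjSum t₁ = s₂.disjSum t₂) :
    s₁ = s₂ ∧ t₁ = t₂ := by
  constructor
  · ext a
    have := Finset.ext_iff.mp h (Sum.inl a)
    simpa [Finset.inl_mem_disjSum] using this
  · ext b
    have := Finset.ext_iff.mp h (Sum.inr b)
    simpa [Finset.inr_mem_disjSum] using this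

lemma sum_choose_le (m k : ℕ) : ∑ i ∈ Finset.range (k+1), m.choose i ≤ (m+1)^k := by
  induction k with
  | zero => simp
  | succ k ih =>
    rw [Finset.sum_range_succ, pow_succ]
    have h1 : m.choose (k+1) ≤ m^(k+1) := Nat.choose_le_pow m (k+1)
    have h2 : m^(k+1) ≤ m * (m+1)^k := by
      rw [pow_succ']
      exact Nat.mul_le_mul_left m (Nat.pow_le_pow_left (Nat.le_succ m) k)
    calc ∑ i ∈ Finset.range (k+1), m.choose i + m.choose (k+1)
        ≤ (m+1)^k + m * (m+1)^k := Nat.add_le_add ih (h1.trans h2)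
      _ = (m+1)^k * (m+1) := by ring

lemma card_filter_card_le (γ : Type*) [Fintype γ] [DecidableEq γ] (k : ℕ) :
    ((Finset.univ : Finset (Finset γ)).filter (fun S => S.card ≤ k)).card
      ≤ (Fintype.card γ + 1)^k := by
  have he : (Finset.univ.filter (fun S : Finset γ => S.card ≤ k))
      = (Finset.range (k+1)).biUnion (fun i => Finset.univ.powersetCard i) := by
    ext S
    simp [Finset.mem_powersetCard, Nat.lt_succ_iff]
  rw [he]
  refine le_trans Finset.card_biUnion_le ?_
  calc ∑ i ∈ Finset.range (k+1), ((Finset.univ : Finset γ).powersetCard i).card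
      = ∑ i ∈ Finset.range (k+1), (Fintype.card γ).choose i := by
        simp [Finset.card_powersetCard]
    _ ≤ _ := sum_choose_le _ _

lemma exists_hard (n w : ℕ)
    (hcount : (w*n + (n*w + n*n) + 1)^w < 2^(n*n)) :
    ∃ A : Matrix (Fin n) (Fin n) (ZMod 2),
      ∀ (B : Matrix (Fin w) (Fin n) (ZMod 2)) (C : Matrix (Fin n) (Fin w) (ZMod 2))
        (D : Matrix (Fin n) (Fin n) (ZMod 2)),
        nnz B + nnz C + nnz D < w → A ≠ C * B + D := by
  classical
  set Tri := Matrix (Fin w) (Fin n) (ZMod 2) × Matrix (Fin n) (Fin w) (ZMod 2) ×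
    Matrix (Fin n) (Fin n) (ZMod 2) with hTri
  set φ : Tri → Matrix (Fin n) (Fin n) (ZMod 2) := fun x => x.2.1 * x.1 + x.2.2 with hφ
  set bad : Finset Tri :=
    Finset.univ.filter (fun x : Tri => nnz x.1 + nnz x.2.1 + nnz x.2.2 < w) with hbad
  set S : Finset (Matrix (Fin n) (Fin n) (ZMod 2)) := bad.image φ with hS
  set P := (Fin w × Fin n) ⊕ ((Fin n × Fin w) ⊕ (Fin n × Fin n)) with hP
  have hcardP : Fintype.card P = w*n + (n*w + n*n) := by simp [hP]
  set ψ : Tri → Finset P := fun x => (supp x.1).disjSum ((supp x.2.1).disjSum (supp x.2.2))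
    with hψ
  have hbadcard : bad.card ≤ (w*n + (n*w + n*n) + 1)^w := by
    rw [← hcardP]
    refine le_trans (Finset.card_le_card_of_injOn ψ ?_ ?_)
      (card_filter_card_le P w)
    · intro x hx
      rw [Finset.mem_coe, hbad, Finset.mem_filter] at hx
      simp only [Finset.mem_coe, Finset.mem_filter, Finset.mem_univ, true_and]
      rw [hψ]
      dsimp only
      rw [Finset.card_disjSum, Finset.card_disjSum,
        ← nnz_eq_card_supp, ← nnz_eq_card_supp, ← nnz_eq_card_supp]
      omega
    · intro x _ y _ hxy
      rw [hψ] at hxy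
      obtain ⟨h1, h23⟩ := disjSum_inj hxy
      obtain ⟨h2, h3⟩ := disjSum_inj h23
      exact Prod.ext (eq_of_supp_eq h1) (Prod.ext (eq_of_supp_eq h2) (eq_of_supp_eq h3))
  have hScard : S.card < Fintype.card (Matrix (Fin n) (Fin n) (ZMod 2)) := by
    have hcardM : Fintype.card (Matrix (Fin n) (Fin n) (ZMod 2)) = 2^(n*n) := by
      rw [Fintype.card_eq_nat_card]; simp only [Matrix]; rw [Nat.card_fun, Nat.card_fun]; simp; ring
    rw [hcardM]
    exact lt_of_le_of_lt (le_trans Finset.card_image_le hbadcard) hcount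
  have hcompl : Sᶜ.Nonempty := by
    rw [← Finset.card_pos, Finset.card_compl]
    omega
  obtain ⟨A, hA⟩ := hcompl
  refine ⟨A, ?_⟩
  intro B C D hlt heq
  have : A ∈ S := by
    rw [hS]
    refine Finset.mem_image.mpr ⟨(B, C, D), ?_, heq.symm⟩
    rw [hbad, Finset.mem_filter]
    exact ⟨Finset.mem_univ _, hlt⟩
  simp at hA
  exact hA this

lemma reduce {n r w : ℕ} (B : Matrix (Fin r) (Fin n) (ZMod 2))
    (C : Matrix (Fin n) (Fin r) (ZMod 2)) (hw : nnz B < w) :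
    ∃ (B' : Matrix (Fin w) (Fin n) (ZMod 2)) (C' : Matrix (Fin n) (Fin w) (ZMod 2)),
      C' * B' = C * B ∧ nnz B' ≤ nnz B ∧ nnz C' ≤ nnz C := by
  classical
  set T : Finset (Fin r) :=
    (Finset.univ.filter (fun p : Fin r × Fin n => B p.1 p.2 ≠ 0)).image Prod.fst with hT
  have hmemT : ∀ i : Fin r, i ∈ T ↔ ∃ j, B i j ≠ 0 := by intro i; simp [hT]
  have hcard : T.card ≤ nnz B := Finset.card_image_le
  have hlt : T.card < w := lt_of_le_of_lt hcard hw
  set t := T.card with ht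
  set e : Fin t ≃o {x // x ∈ T} := T.orderIsoOfFin rfl with he
  set B' : Matrix (Fin w) (Fin n) (ZMod 2) :=
    fun k j => if h : (k : ℕ) < t then B ((e ⟨(k : ℕ), h⟩) : Fin r) j else 0 with hB'
  set C' : Matrix (Fin n) (Fin w) (ZMod 2) :=
    fun j k => if h : (k : ℕ) < t then C j ((e ⟨(k : ℕ), h⟩) : Fin r) else 0 with hC'
  have hrowzero : ∀ i : Fin r, i ∉ T → ∀ j, B i j = 0 := by
    intro i hi j
    by_contra hne
    exact hi ((hmemT i).mpr ⟨j, hne⟩)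
  refine ⟨B', C', ?_, ?_, ?_⟩
  · ext a b
    simp only [Matrix.mul_apply]
    set g : ℕ → ZMod 2 :=
      fun i => if h : i < t then C a ((e ⟨i, h⟩) : Fin r) * B ((e ⟨i, h⟩) : Fin r) b else 0 with hg
    have hstep : ∀ k : Fin w, C' a k * B' k b = g (k : ℕ) := by
      intro k
      rw [hB', hC', hg]
      by_cases h : (k : ℕ) < t
      · simp [h]
      · simp [h]
    rw [Finset.sum_congr rfl (fun k _ => hstep k)]
    rw [Fin.sum_univ_eq_sum_range g w]
    have h1 : ∑ i ∈ Finset.range w, g i = ∑ i ∈ Finset.range t, g i := by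
      refine (Finset.sum_subset (Finset.range_subset_range.mpr hlt.le) ?_).symm
      intro x _ hx
      rw [hg]
      exact dif_neg (by simpa using hx)
    rw [h1, ← Fin.sum_univ_eq_sum_range g t]
    have h2 : ∀ k : Fin t, g (k : ℕ) = C a ((e k) : Fin r) * B ((e k) : Fin r) b := by
      intro k
      rw [hg]
      simp only [k.isLt, dif_pos, Fin.eta]
    rw [Finset.sum_congr rfl (fun k _ => h2 k)]
    have h3 : ∑ k : Fin t, C a ((e k) : Fin r) * B ((e k) : Fin r) b
        = ∑ x : {x // x ∈ T}, C a (x : Fin r) * B (x : Fin r) b :=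
      Fintype.sum_equiv e.toEquiv _ _ (fun k => rfl)
    rw [h3, Finset.sum_coe_sort T (fun i => C a i * B i b)]
    refine Finset.sum_subset (Finset.subset_univ T) ?_
    intro i _ hi
    rw [hrowzero i hi b, mul_zero]
  · -- nnz B' ≤ nnz B
    rcases Nat.eq_zero_or_pos t with h0 | h0
    · have : ∀ k j, B' k j = 0 := by
        intro k j; rw [hB']; exact dif_neg (by omega)
      have : nnz B' = 0 := by
        rw [nnz, Finset.card_eq_zero]
        ext p; simp [this]
      omega
    · set i0 : Fin r := ((e ⟨0, h0⟩) : Fin r) with hi0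
      refine Finset.card_le_card_of_injOn
        (fun p => (if h : (p.1 : ℕ) < t then ((e ⟨(p.1 : ℕ), h⟩) : Fin r) else i0, p.2)) ?_ ?_
      · rintro ⟨k, j⟩ hp
        simp only [Finset.mem_coe, Finset.mem_filter, Finset.mem_univ, true_and] at hp ⊢
        rw [hB'] at hp
        by_cases h : (k : ℕ) < t
        · simpa [h] using hp
        · simp [h] at hp
      · rintro ⟨k1, j1⟩ hp1 ⟨k2, j2⟩ hp2 heq
        simp only [Finset.mem_coe, Finset.mem_filter, Finset.mem_univ, true_and] at hp1 hp2
        rw [hB'] at hp1 hp2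
        by_cases h1 : (k1 : ℕ) < t
        swap
        · simp [h1] at hp1
        by_cases h2 : (k2 : ℕ) < t
        swap
        · simp [h2] at hp2
        simp only [h1, h2, dif_pos, Prod.mk.injEq] at heq
        have hk : k1 = k2 := by
          have := e.injective (Subtype.coe_injective heq.1)
          have := Fin.mk.injEq (k1:ℕ) _ (k2:ℕ) _ ▸ this
          exact Fin.ext (by simpa using congrArg Fin.val (e.injective (Subtype.coe_injective heq.1)))
        exact Prod.ext hk heq.2
  · -- nnz C' ≤ nnz C
    rcases Nat.eq_zero_or_pos t with h0 | h0
    · have hz : ∀ j k, C' j k = 0 := by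
        intro j k; rw [hC']; exact dif_neg (by omega)
      have : nnz C' = 0 := by
        rw [nnz, Finset.card_eq_zero]
        ext p; simp [hz]
      omega
    · set i0 : Fin r := ((e ⟨0, h0⟩) : Fin r) with hi0
      refine Finset.card_le_card_of_injOn
        (fun p => (p.1, if h : (p.2 : ℕ) < t then ((e ⟨(p.2 : ℕ), h⟩) : Fin r) else i0)) ?_ ?_
      · rintro ⟨j, k⟩ hp
        simp only [Finset.mem_coe, Finset.mem_filter, Finset.mem_univ, true_and] at hp ⊢
        rw [hC'] at hp
        by_cases h : (k : ℕ) < t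
        · simpa [h] using hp
        · simp [h] at hp
      · rintro ⟨j1, k1⟩ hp1 ⟨j2, k2⟩ hp2 heq
        simp only [Finset.mem_coe, Finset.mem_filter, Finset.mem_univ, true_and] at hp1 hp2
        rw [hC'] at hp1 hp2
        by_cases h1 : (k1 : ℕ) < t
        swap
        · simp [h1] at hp1
        by_cases h2 : (k2 : ℕ) < t
        swap
        · simp [h2] at hp2
        simp only [h1, h2, dif_pos, Prod.mk.injEq] at heq
        have hk : k1 = k2 :=
          Fin.ext (by simpa using congrArg Fin.val (e.injective (Subtype.coe_injective heq.2)))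
        exact Prod.ext heq.1 hk


end LBHelper

/-- Some linear `n`-operators require `Ω(n²/log n)` wires in any depth-2 circuit all of
whose gates are parities: if `A = C * B + D` then `|B| + |C| + |D| ≥ c·n²/log₂ n`. -/
theorem lower_bound_fully_linear_depth_two :
    ∃ c : ℝ, c > 0 ∧ ∃ N : ℕ, ∀ n ≥ N,
      ∃ A : Matrix (Fin n) (Fin n) (ZMod 2),
        ∀ (r : ℕ) (B : Matrix (Fin r) (Fin n) (ZMod 2))
          (C : Matrix (Fin n) (Fin r) (ZMod 2)) (D : Matrix (Fin n) (Fin n) (ZMod 2)),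
          A = C * B + D →
          c * (n : ℝ) ^ 2 / Real.logb 2 n ≤ (nnz B + nnz C + nnz D : ℕ) := by
  refine ⟨1/13, by norm_num, 16, ?_⟩
  intro n hn
  have hn0 : 0 < n := by omega
  have hnR : (16:ℝ) ≤ n := by exact_mod_cast hn
  have hn0R : (0:ℝ) < n := by linarith
  set L : ℝ := Real.logb 2 n with hL
  have hL1 : 1 ≤ L := by
    rw [hL, Real.le_logb_iff_rpow_le (by norm_num) hn0R, Real.rpow_one]
    linarith
  have hL0 : 0 < L := by linarith
  have hLn : L ≤ n := by
    rw [hL, Real.logb_le_iff_le_rpow (by norm_num) hn0R]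
    rw [show ((n:ℝ) : ℝ) = (((n:ℕ) : ℝ)) from rfl, Real.rpow_natCast]
    exact_mod_cast (Nat.lt_two_pow_self (n := n)).le
  set x : ℝ := 1/13 * (n:ℝ)^2 / L with hx
  have hx0 : 0 < x := by positivity
  set w : ℕ := ⌈x⌉₊ with hw
  have hxw : x ≤ (w : ℝ) := Nat.le_ceil x
  have hwlt : (w : ℝ) < x + 1 := Nat.ceil_lt_add_one hx0.le
  have hxL : x * L = 1/13 * (n:ℝ)^2 := div_mul_cancel₀ _ (ne_of_gt hL0)
  have hxle : x ≤ 1/13 * (n:ℝ)^2 := by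
    rw [hx]
    rw [div_le_iff₀ hL0]
    nlinarith
  -- key inequality
  have hkey : 4 * (w:ℝ) * L < (n:ℝ)^2 := by
    have h1 : 4 * (w:ℝ) * L < 4 * (x+1) * L := by
      have := mul_lt_mul_of_pos_right (by linarith : 4*(w:ℝ) < 4*(x+1)) hL0
      linarith
    have h2 : 4 * (x+1) * L = 4 * (x*L) + 4*L := by ring
    rw [h2, hxL] at h1
    nlinarith
  -- w ≤ n*n
  have hwnn : w ≤ n*n := by
    have : (w:ℝ) < ((n*n : ℕ) : ℝ) := by
      push_cast
      nlinarith
    exact_mod_cast this.le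
  -- m + 1 ≤ n^4
  have hm : w*n + (n*w + n*n) + 1 ≤ n^4 := by
    have h1 : w*n ≤ n*n*n := Nat.mul_le_mul_right n hwnn
    have h2 : n*w ≤ n*(n*n) := Nat.mul_le_mul_left n hwnn
    have h16 : 16 ≤ n := hn
    have h3 : n^4 = n * (n*n*n) := by ring
    have h4 : 16 * (n*n*n) ≤ n * (n*n*n) := Nat.mul_le_mul_right _ h16
    have h5 : n*n ≤ n*n*n := Nat.le_mul_of_pos_right (n*n) hn0
    have h6 : 1 ≤ n*n*n := Nat.one_le_iff_ne_zero.mpr (by positivity)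
    linarith
  -- the count
  have hcount : (w*n + (n*w + n*n) + 1)^w < 2^(n*n) := by
    have hR : ((w*n + (n*w + n*n) + 1 : ℕ) : ℝ)^w < ((2^(n*n) : ℕ) : ℝ) := by
      have hb1 : ((w*n + (n*w + n*n) + 1 : ℕ) : ℝ) ≤ (n:ℝ)^4 := by
        exact_mod_cast Nat.cast_le.mpr hm |>.trans_eq (by push_cast; ring)
      calc ((w*n + (n*w + n*n) + 1 : ℕ) : ℝ)^w ≤ ((n:ℝ)^4)^w := by
            exact pow_le_pow_left₀ (by positivity) hb1 w
        _ = (n:ℝ)^(4*w) := by rw [← pow_mul]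
        _ < ((2^(n*n) : ℕ) : ℝ) := by
            have hn2L : (n:ℝ) = (2:ℝ) ^ L := (Real.rpow_logb (by norm_num) (by norm_num) hn0R).symm
            rw [hn2L, ← Real.rpow_natCast ((2:ℝ)^L) (4*w), ← Real.rpow_mul (by norm_num)]
            push_cast
            rw [← Real.rpow_natCast (2:ℝ) (n*n)]
            apply Real.rpow_lt_rpow_left_iff (by norm_num : (1:ℝ) < 2) |>.mpr
            push_cast
            nlinarith
    exact_mod_cast hR
  obtain ⟨A, hA⟩ := LBHelper.exists_hard n w hcount
  refine ⟨A, ?_⟩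
  intro r B C D heq
  set s := nnz B + nnz C + nnz D with hs
  have hws : w ≤ s := by
    by_contra hcon
    push_neg at hcon
    have hBlt : nnz B < w := by omega
    obtain ⟨B', C', hCB, hB', hC'⟩ := LBHelper.reduce B C hBlt
    exact hA B' C' D (by omega) (by rw [heq, ← hCB])
  calc (1/13) * (n:ℝ)^2 / L ≤ (w:ℝ) := hxw
    _ ≤ ((s:ℕ):ℝ) := by exact_mod_cast hws
end

section
/- Let m, n, L : ℕ with n ≥ 1, and let d : Fin m → ℕ satisfy d i ≤ n for all i and ∑ i, d i ≤ L. Then ∑ i, (2 : ℝ)^(d i) ≤ (m : ℝ) * 2^((2 * L : ℝ) / n) + ((n : ℝ) / 2) * 2^n. -/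
/-- Key counting estimate: if `d i ≤ n` for all `i` and `∑ d i ≤ L`, then
`∑ 2^(d i) ≤ m·2^(2L/n) + (n/2)·2^n`. -/
theorem sum_two_pow_fanin_le (m n L : ℕ) (hn : 1 ≤ n) (d : Fin m → ℕ)
    (hd : ∀ i : Fin m, d i ≤ n) (hL : ∑ i : Fin m, d i ≤ L) :
    ∑ i : Fin m, (2 : ℝ) ^ (d i)
      ≤ (m : ℝ) * (2 : ℝ) ^ ((2 * (L : ℝ)) / (n : ℝ)) + ((n : ℝ) / 2) * 2 ^ n := by
  have hn' : (0:ℝ) < n := by exact_mod_cast hn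
  set T : ℝ := (2 * (L : ℝ)) / (n : ℝ) with hT
  rcases Nat.eq_zero_or_pos L with hL0 | hLpos
  · subst hL0
    have hd0 : ∀ i : Fin m, d i = 0 := by
      intro i
      have h := Finset.single_le_sum (f := fun i : Fin m => d i)
        (fun i _ => Nat.zero_le _) (Finset.mem_univ i)
      omega
    have hT0 : T = 0 := by simp [hT]
    have : ∑ i : Fin m, (2 : ℝ) ^ (d i) = m := by
      simp [hd0]
    rw [this, hT0, Real.rpow_zero]
    have : (0:ℝ) ≤ ((n : ℝ) / 2) * 2 ^ n := by positivity
    linarith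
  · have hLpos' : (0:ℝ) < L := by exact_mod_cast hLpos
    have hTpos : 0 < T := by rw [hT]; positivity
    set S : Finset (Fin m) := Finset.univ.filter (fun i => T < (d i : ℝ)) with hS
    have hsumL : ∑ i : Fin m, (d i : ℝ) ≤ L := by exact_mod_cast hL
    have hcardT : (S.card : ℝ) * T ≤ L := by
      calc (S.card : ℝ) * T = ∑ _i ∈ S, T := by rw [Finset.sum_const, nsmul_eq_mul]
        _ ≤ ∑ i ∈ S, (d i : ℝ) := Finset.sum_le_sum (fun i hi => by
            have : T < (d i : ℝ) := by simpa [hS] using (Finset.mem_filter.mp hi).2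
            linarith)
        _ ≤ ∑ i : Fin m, (d i : ℝ) := Finset.sum_le_sum_of_subset_of_nonneg
            (Finset.subset_univ S) (by intros; positivity)
        _ ≤ L := hsumL
    have hcard : (S.card : ℝ) ≤ (n : ℝ) / 2 := by
      rw [hT, mul_div_assoc', div_le_iff₀ hn'] at hcardT
      rw [le_div_iff₀ (by norm_num : (0:ℝ) < 2)]
      nlinarith
    have hsplit : ∑ i : Fin m, (2 : ℝ) ^ (d i)
        = ∑ i ∈ S, (2 : ℝ) ^ (d i) + ∑ i ∈ Sᶜ, (2 : ℝ) ^ (d i) :=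
      (Finset.sum_add_sum_compl S _).symm
    have h1 : ∑ i ∈ S, (2 : ℝ) ^ (d i) ≤ ((n : ℝ) / 2) * 2 ^ n := by
      calc ∑ i ∈ S, (2 : ℝ) ^ (d i) ≤ ∑ _i ∈ S, (2:ℝ) ^ n :=
            Finset.sum_le_sum (fun i _ =>
              pow_le_pow_right₀ one_le_two (hd i))
        _ = (S.card : ℝ) * 2 ^ n := by rw [Finset.sum_const, nsmul_eq_mul]
        _ ≤ ((n : ℝ) / 2) * 2 ^ n := by
            apply mul_le_mul_of_nonneg_right hcard (by positivity)
    have h2 : ∑ i ∈ Sᶜ, (2 : ℝ) ^ (d i) ≤ (m : ℝ) * (2 : ℝ) ^ T := by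
      calc ∑ i ∈ Sᶜ, (2 : ℝ) ^ (d i) ≤ ∑ _i ∈ Sᶜ, (2:ℝ) ^ T := by
            apply Finset.sum_le_sum
            intro i hi
            have hle : (d i : ℝ) ≤ T := by
              have := (Finset.mem_compl.mp hi)
              by_contra h
              exact this (by simp [hS]; linarith)
            calc (2:ℝ) ^ (d i) = (2:ℝ) ^ ((d i : ℝ)) := by
                  rw [Real.rpow_natCast]
              _ ≤ (2:ℝ) ^ T := Real.rpow_le_rpow_of_exponent_le one_le_two hle
        _ = (Sᶜ.card : ℝ) * 2 ^ T := by rw [Finset.sum_const, nsmul_eq_mul]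
        _ ≤ (m : ℝ) * (2:ℝ) ^ T := by
            apply mul_le_mul_of_nonneg_right _ (by positivity)
            have : Sᶜ.card ≤ m := by
              simpa using Finset.card_le_card (Finset.subset_univ Sᶜ)
            exact_mod_cast this
    rw [hsplit]
    linarith
end
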